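/- arXiv:2012.01998 — 8 statements merged into one kernel-verified Lean document; each statement's English description precedes it below -/
import Mathlib

section
/- (Lemma 1) Let H be a finite-dimensional complex Hilbert space, |T⟩ ∈ H a unit vector, and M_0, …, M_{n-1} Kraus operators on H (∑_i M_i† M_i = I) satisfying the fixed-point condition M_i |T⟩ = z_i |T⟩ for complex numbers z_i. Then the quantum channel $(ρ) = ∑_i M_i ρ M_i† never decreases the target fidelity: for every density operator ρ on H, F($(ρ), T) − F(ρ, T) ≥ 0, where F(ρ, T) = ⟨T|ρ|T⟩. -/
open Matrix Complex ComplexOrder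

section Helpers

variable {d n : ℕ}

lemma sum_mulVec' (A : Fin n → Matrix (Fin d) (Fin d) ℂ) (v : Fin d → ℂ) :
    (∑ i, A i) *ᵥ v = ∑ i, A i *ᵥ v := by
  ext j
  simp only [Matrix.mulVec, dotProduct, Finset.sum_apply, Matrix.sum_apply,
    Finset.sum_mul]
  exact Finset.sum_comm

lemma dotProduct_sum' (v : Fin d → ℂ) (f : Fin n → Fin d → ℂ) :
    v ⬝ᵥ (∑ i, f i) = ∑ i, v ⬝ᵥ f i := by
  simp only [dotProduct, Finset.sum_apply, Finset.mul_sum]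
  exact Finset.sum_comm

lemma sum_dotProduct' (f : Fin n → Fin d → ℂ) (v : Fin d → ℂ) :
    (∑ i, f i) ⬝ᵥ v = ∑ i, f i ⬝ᵥ v := by
  simp only [dotProduct, Finset.sum_apply, Finset.sum_mul]
  exact Finset.sum_comm

lemma mulVec_sum' (A : Matrix (Fin d) (Fin d) ℂ) (f : Fin n → Fin d → ℂ) :
    A *ᵥ (∑ i, f i) = ∑ i, A *ᵥ f i :=
  map_sum A.mulVecLin f Finset.univ

end Helpers

/-- **Lemma 1.** A quantum channel `ρ ↦ ∑ i, M i * ρ * (M i)ᴴ` whose Kraus operators satisfy the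
completeness relation and the fixed-point condition `M i *ᵥ T = z i • T` with respect to a unit
vector `T` never decreases the target fidelity `F(ρ, T) = ⟨T|ρ|T⟩`. The inequality is stated in
`ℂ` with its standard partial order (so in particular both fidelities are real). -/
theorem channel_fidelity_nondecreasing {d n : ℕ}
    (M : Fin n → Matrix (Fin d) (Fin d) ℂ)
    (T : Fin d → ℂ) (hT : star T ⬝ᵥ T = 1)
    (hM : ∑ i, (M i)ᴴ * M i = 1)
    (z : Fin n → ℂ) (hz : ∀ i, M i *ᵥ T = z i • T)
    (ρ : Matrix (Fin d) (Fin d) ℂ) (hρ : ρ.PosSemidef) (hρtr : ρ.trace = 1) :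
    0 ≤ star T ⬝ᵥ ((∑ i, M i * ρ * (M i)ᴴ) *ᵥ T) - star T ⬝ᵥ (ρ *ᵥ T) := by
  classical
  set w : Fin n → Fin d → ℂ := fun i => (M i)ᴴ *ᵥ T with hw
  set r : Fin n → Fin d → ℂ := fun i => w i - star (z i) • T with hr
  -- ⟨T| (M i)ᴴ |T⟩ = conj z i
  have hdw : ∀ i, star T ⬝ᵥ w i = star (z i) := by
    intro i
    show star T ⬝ᵥ ((M i)ᴴ *ᵥ T) = star (z i)
    rw [dotProduct_mulVec, ← Matrix.star_mulVec, hz i]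
    simp [star_smul, smul_dotProduct, hT]
  -- (M i)ᴴ * M i applied to T gives z i • w i
  have hMMT : ∀ i, ((M i)ᴴ * M i) *ᵥ T = z i • w i := by
    intro i
    rw [← Matrix.mulVec_mulVec, hz i, Matrix.mulVec_smul]
  -- ∑ |z i|² = 1
  have hnorm : ∑ i, z i * star (z i) = 1 := by
    have h := congrArg (fun A => star T ⬝ᵥ (A *ᵥ T)) hM
    simp only [sum_mulVec', dotProduct_sum', Matrix.one_mulVec, hT] at h
    calc ∑ i, z i * star (z i)
        = ∑ i, star T ⬝ᵥ (((M i)ᴴ * M i) *ᵥ T) := by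
          refine Finset.sum_congr rfl fun i _ => ?_
          rw [hMMT i, dotProduct_smul, hdw i, smul_eq_mul]
      _ = 1 := by
          rw [← dotProduct_sum', ← sum_mulVec', hM, Matrix.one_mulVec, hT]
  -- ∑ z i • r i = 0
  have hsum : ∑ i, z i • r i = 0 := by
    have h1 : ∑ i, z i • w i = T := by
      calc ∑ i, z i • w i = ∑ i, ((M i)ᴴ * M i) *ᵥ T :=
            Finset.sum_congr rfl fun i _ => (hMMT i).symm
        _ = (∑ i, (M i)ᴴ * M i) *ᵥ T := (sum_mulVec' _ _).symm
        _ = T := by rw [hM, Matrix.one_mulVec]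
    have h2 : ∑ i, z i • r i = (∑ i, z i • w i) - (∑ i, z i * star (z i)) • T := by
      have : ∀ i, z i • r i = z i • w i - (z i * star (z i)) • T := by
        intro i
        rw [hr]
        simp [smul_sub, smul_smul]
      rw [Finset.sum_congr rfl fun i _ => this i, Finset.sum_sub_distrib, Finset.sum_smul]
    rw [h2, h1, hnorm, one_smul, sub_self]
  -- Each channel term is ⟨w i | ρ | w i⟩
  have hterm : ∀ i, star T ⬝ᵥ ((M i * ρ * (M i)ᴴ) *ᵥ T) = star (w i) ⬝ᵥ (ρ *ᵥ w i) := by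
    intro i
    rw [← Matrix.mulVec_mulVec, ← Matrix.mulVec_mulVec, dotProduct_mulVec]
    congr 1
    show star T ᵥ* M i = star ((M i)ᴴ *ᵥ T)
    rw [Matrix.star_mulVec, Matrix.conjTranspose_conjTranspose]
  -- Expand each term using w i = star (z i) • T + r i
  have hwi : ∀ i, w i = star (z i) • T + r i := by
    intro i; rw [hr]; simp
  have hexp : ∀ i, star (w i) ⬝ᵥ (ρ *ᵥ w i)
      = (z i * star (z i)) * (star T ⬝ᵥ (ρ *ᵥ T))
        + z i * (star T ⬝ᵥ (ρ *ᵥ r i))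
        + star (z i) * (star (r i) ⬝ᵥ (ρ *ᵥ T))
        + star (r i) ⬝ᵥ (ρ *ᵥ r i) := by
    intro i
    rw [hwi i]
    simp only [star_add, star_smul, star_star, Matrix.mulVec_add, Matrix.mulVec_smul,
      dotProduct_add, add_dotProduct, smul_dotProduct,
      dotProduct_smul, smul_eq_mul]
    ring
  -- cross terms vanish
  have hcross1 : ∑ i, z i * (star T ⬝ᵥ (ρ *ᵥ r i)) = 0 := by
    have : ∑ i, z i * (star T ⬝ᵥ (ρ *ᵥ r i)) = star T ⬝ᵥ (ρ *ᵥ (∑ i, z i • r i)) := by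
      rw [mulVec_sum', dotProduct_sum']
      refine Finset.sum_congr rfl fun i _ => ?_
      rw [Matrix.mulVec_smul, dotProduct_smul, smul_eq_mul]
    rw [this, hsum]
    simp
  have hcross2 : ∑ i, star (z i) * (star (r i) ⬝ᵥ (ρ *ᵥ T)) = 0 := by
    have : ∑ i, star (z i) * (star (r i) ⬝ᵥ (ρ *ᵥ T))
        = star (∑ i, z i • r i) ⬝ᵥ (ρ *ᵥ T) := by
      rw [star_sum]
      rw [show (∑ i, star (z i • r i)) = ∑ i, star (z i) • star (r i) by
        refine Finset.sum_congr rfl fun i _ => by rw [star_smul]]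
      rw [sum_dotProduct']
      refine Finset.sum_congr rfl fun i _ => ?_
      rw [smul_dotProduct, smul_eq_mul]
    rw [this, hsum]
    simp
  -- rewrite the goal
  have hmain : star T ⬝ᵥ ((∑ i, M i * ρ * (M i)ᴴ) *ᵥ T) - star T ⬝ᵥ (ρ *ᵥ T)
      = ∑ i, star (r i) ⬝ᵥ (ρ *ᵥ r i) := by
    rw [sum_mulVec', dotProduct_sum']
    rw [show (∑ i, star T ⬝ᵥ ((M i * ρ * (M i)ᴴ) *ᵥ T)) = ∑ i, star (w i) ⬝ᵥ (ρ *ᵥ w i) from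
      Finset.sum_congr rfl fun i _ => hterm i]
    rw [show (∑ i, star (w i) ⬝ᵥ (ρ *ᵥ w i))
        = (∑ i, z i * star (z i)) * (star T ⬝ᵥ (ρ *ᵥ T))
          + (∑ i, z i * (star T ⬝ᵥ (ρ *ᵥ r i)))
          + (∑ i, star (z i) * (star (r i) ⬝ᵥ (ρ *ᵥ T)))
          + ∑ i, star (r i) ⬝ᵥ (ρ *ᵥ r i) by
      rw [Finset.sum_mul, ← Finset.sum_add_distrib, ← Finset.sum_add_distrib,
        ← Finset.sum_add_distrib]
      exact Finset.sum_congr rfl fun i _ => hexp i]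
    rw [hnorm, hcross1, hcross2]
    ring
  rw [hmain]
  exact Finset.sum_nonneg fun i _ => hρ.dotProduct_mulVec_nonneg (r i)
end

section
/- Let H be a finite-dimensional complex Hilbert space, |T⟩ ∈ H a unit vector, and M_0, …, M_{n-1} Kraus operators (∑_i M_i† M_i = I) satisfying M_i |T⟩ = z_i |T⟩ for complex numbers z_i. Then for every density operator ρ on H the fidelity increment admits the sum-of-squares representation F($(ρ), T) − F(ρ, T) = ∑_i ‖A_i |T⟩‖², where A_i = √ρ (I − |T⟩⟨T|) M_i† and $(ρ) = ∑_i M_i ρ M_i†. -/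
open Matrix Complex ComplexOrder

lemma aux_sum_mulVec {d n m : ℕ} (A : Fin n → Matrix (Fin d) (Fin m) ℂ) (v : Fin m → ℂ) :
    (∑ i, A i) *ᵥ v = ∑ i, A i *ᵥ v := by
  ext j
  simp only [mulVec, dotProduct, Finset.sum_apply, Matrix.sum_apply, Finset.sum_mul]
  exact Finset.sum_comm

lemma aux_mulVec_sum {d m n : ℕ} (A : Matrix (Fin d) (Fin m) ℂ) (v : Fin n → Fin m → ℂ) :
    A *ᵥ (∑ i, v i) = ∑ i, A *ᵥ v i := by
  ext j
  simp only [mulVec, dotProduct, Finset.sum_apply, Finset.mul_sum]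
  exact Finset.sum_comm

lemma aux_dotProduct_sum {d n : ℕ} (x : Fin d → ℂ) (v : Fin n → Fin d → ℂ) :
    x ⬝ᵥ (∑ i, v i) = ∑ i, x ⬝ᵥ v i := by
  simp only [dotProduct, Finset.sum_apply, Finset.mul_sum]
  exact Finset.sum_comm

lemma aux_sum_dotProduct {d n : ℕ} (v : Fin n → Fin d → ℂ) (x : Fin d → ℂ) :
    (∑ i, v i) ⬝ᵥ x = ∑ i, v i ⬝ᵥ x := by
  simp only [dotProduct, Finset.sum_apply, Finset.sum_mul]
  exact Finset.sum_comm

lemma aux_norm_sq {d : ℕ} (x : Fin d → ℂ) :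
    ((‖(EuclideanSpace.equiv (Fin d) ℂ).symm x‖ : ℝ) : ℂ) ^ 2 = star x ⬝ᵥ x := by
  have h : ‖(EuclideanSpace.equiv (Fin d) ℂ).symm x‖ ^ 2 = ∑ i, ‖x i‖ ^ 2 := by
    rw [EuclideanSpace.norm_eq, Real.sq_sqrt (by positivity)]
    rfl
  calc ((‖(EuclideanSpace.equiv (Fin d) ℂ).symm x‖ : ℝ) : ℂ) ^ 2
      = ((‖(EuclideanSpace.equiv (Fin d) ℂ).symm x‖ ^ 2 : ℝ) : ℂ) := by push_cast; ring
    _ = ((∑ i, ‖x i‖ ^ 2 : ℝ) : ℂ) := by rw [h]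
    _ = star x ⬝ᵥ x := by
        push_cast
        refine Finset.sum_congr rfl fun i _ => ?_
        rw [Pi.star_apply, RCLike.star_def, ← Complex.normSq_eq_conj_mul_self,
          ← Complex.sq_norm]
        norm_cast

lemma aux_vecMulVec_mulVec {d : ℕ} (a b v : Fin d → ℂ) :
    vecMulVec a b *ᵥ v = (b ⬝ᵥ v) • a := by
  ext j
  simp [mulVec, dotProduct, vecMulVec, Finset.mul_sum, mul_comm, mul_left_comm, mul_assoc]

/-- The fidelity increment of the channel `ρ ↦ ∑ i, M i * ρ * (M i)ᴴ` admits the sum-of-squares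
representation `F($(ρ), T) − F(ρ, T) = ∑ i ‖A i *ᵥ T‖²` with
`A i = √ρ * (1 − |T⟩⟨T|) * (M i)ᴴ`, where `√ρ` is the positive semidefinite square root of `ρ`
and `‖·‖` is the Euclidean norm. -/
theorem fidelity_increment_sum_of_squares {d n : ℕ}
    (M : Fin n → Matrix (Fin d) (Fin d) ℂ)
    (T : Fin d → ℂ) (hT : star T ⬝ᵥ T = 1)
    (hM : ∑ i, (M i)ᴴ * M i = 1)
    (z : Fin n → ℂ) (hz : ∀ i, M i *ᵥ T = z i • T)
    (ρ : Matrix (Fin d) (Fin d) ℂ) (hρ : ρ.PosSemidef) (hρtr : ρ.trace = 1) :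
    star T ⬝ᵥ ((∑ i, M i * ρ * (M i)ᴴ) *ᵥ T) - star T ⬝ᵥ (ρ *ᵥ T) =
      ∑ i, ((‖(EuclideanSpace.equiv (Fin d) ℂ).symm
        (((hρ.1.eigenvectorUnitary.1 * diagonal ((↑) ∘ (Real.sqrt ·) ∘ hρ.1.eigenvalues) *
          (star hρ.1.eigenvectorUnitary : Matrix (Fin d) (Fin d) ℂ)) *
          (1 - vecMulVec T (star T)) * (M i)ᴴ) *ᵥ T)‖ : ℝ) : ℂ) ^ 2 := by
  classical
  set S := (hρ.1.eigenvectorUnitary.1 * diagonal ((↑) ∘ (Real.sqrt ·) ∘ hρ.1.eigenvalues) *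
          (star hρ.1.eigenvectorUnitary : Matrix (Fin d) (Fin d) ℂ)) with hSdef
  have hSH : Sᴴ = S := by
    rw [hSdef]
    simp only [conjTranspose_mul, diagonal_conjTranspose, Matrix.mul_assoc]
    have hD : star ((↑) ∘ (Real.sqrt ·) ∘ hρ.1.eigenvalues : Fin d → ℂ)
        = ((↑) ∘ (Real.sqrt ·) ∘ hρ.1.eigenvalues : Fin d → ℂ) := by
      ext j
      simp
    rw [hD]
    simp [Matrix.star_eq_conjTranspose, Matrix.mul_assoc]
  have hSS : S * S = ρ := by
    have hU : (star hρ.1.eigenvectorUnitary : Matrix (Fin d) (Fin d) ℂ) *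
        hρ.1.eigenvectorUnitary.1 = 1 := Unitary.coe_star_mul_self _
    have hDD : diagonal ((↑) ∘ (Real.sqrt ·) ∘ hρ.1.eigenvalues : Fin d → ℂ) *
        diagonal ((↑) ∘ (Real.sqrt ·) ∘ hρ.1.eigenvalues : Fin d → ℂ)
        = diagonal (RCLike.ofReal ∘ hρ.1.eigenvalues) := by
      rw [diagonal_mul_diagonal]
      congr 1
      ext j
      simp only [Function.comp_apply]
      rw [← Complex.ofReal_mul, Real.mul_self_sqrt (hρ.eigenvalues_nonneg j)]
      rfl
    rw [hSdef]
    conv_rhs => rw [hρ.1.spectral_theorem, Unitary.conjStarAlgAut_apply]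
    calc _ = hρ.1.eigenvectorUnitary.1 * (diagonal ((↑) ∘ (Real.sqrt ·) ∘ hρ.1.eigenvalues) *
          ((star hρ.1.eigenvectorUnitary : Matrix (Fin d) (Fin d) ℂ) *
            hρ.1.eigenvectorUnitary.1) *
          diagonal ((↑) ∘ (Real.sqrt ·) ∘ hρ.1.eigenvalues)) *
          (star hρ.1.eigenvectorUnitary : Matrix (Fin d) (Fin d) ℂ) := by
            simp only [Matrix.mul_assoc]
      _ = _ := by rw [hU, Matrix.mul_one, hDD]
  set u : Fin n → Fin d → ℂ := fun i => (M i)ᴴ *ᵥ T with hu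
  set v : Fin n → Fin d → ℂ := fun i => u i - (starRingEnd ℂ (z i)) • T with hv
  have hstaru : ∀ i, star (u i) = star T ᵥ* (M i) := by
    intro i
    rw [hu]
    simp [star_mulVec]
  have hTu : ∀ i, star T ⬝ᵥ u i = starRingEnd ℂ (z i) := by
    intro i
    have h1 : star T ⬝ᵥ u i = star (M i *ᵥ T) ⬝ᵥ T := by
      rw [star_mulVec, hu, dotProduct_mulVec]
    rw [h1, hz i, star_smul, smul_dotProduct, hT]
    simp
  -- each RHS term equals star (v i) ⬝ᵥ (ρ *ᵥ v i)
  have hterm : ∀ i, ((‖(EuclideanSpace.equiv (Fin d) ℂ).symm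
        ((S * (1 - vecMulVec T (star T)) * (M i)ᴴ) *ᵥ T)‖ : ℝ) : ℂ) ^ 2
      = star (v i) ⬝ᵥ (ρ *ᵥ v i) := by
    intro i
    have hw : (S * (1 - vecMulVec T (star T)) * (M i)ᴴ) *ᵥ T = S *ᵥ v i := by
      rw [← mulVec_mulVec, ← mulVec_mulVec]
      refine congrArg (fun x => S *ᵥ x) ?_
      rw [sub_mulVec, one_mulVec, aux_vecMulVec_mulVec]
      show u i - (star T ⬝ᵥ u i) • T = v i
      rw [hTu i, hv]
    rw [hw, aux_norm_sq, star_mulVec, hSH, ← dotProduct_mulVec, mulVec_mulVec, hSS]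
  -- key sums
  have hzu : ∑ i, z i • u i = T := by
    have h1 : ∀ i, z i • u i = ((M i)ᴴ * M i) *ᵥ T := by
      intro i
      rw [hu, ← mulVec_smul, ← hz i, mulVec_mulVec]
    simp_rw [h1]
    rw [← aux_sum_mulVec, hM, one_mulVec]
  have hzz : ∑ i, starRingEnd ℂ (z i) * z i = 1 := by
    have h1 : ∀ i, star T ⬝ᵥ (((M i)ᴴ * M i) *ᵥ T) = starRingEnd ℂ (z i) * z i := by
      intro i
      rw [← mulVec_mulVec, dotProduct_mulVec, ← star_mulVec, hz i, star_smul,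
        smul_dotProduct, dotProduct_smul, hT]
      simp [smul_eq_mul]
    calc ∑ i, starRingEnd ℂ (z i) * z i
        = ∑ i, star T ⬝ᵥ (((M i)ᴴ * M i) *ᵥ T) := by simp_rw [h1]
      _ = star T ⬝ᵥ ((∑ i, (M i)ᴴ * M i) *ᵥ T) := by
          rw [aux_sum_mulVec, aux_dotProduct_sum]
      _ = 1 := by rw [hM, one_mulVec, hT]
  -- expansion of each term
  have hexp : ∀ i, star (v i) ⬝ᵥ (ρ *ᵥ v i)
      = star T ⬝ᵥ ((M i * ρ * (M i)ᴴ) *ᵥ T)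
        - starRingEnd ℂ (z i) * (star (u i) ⬝ᵥ (ρ *ᵥ T))
        - z i * (star T ⬝ᵥ (ρ *ᵥ u i))
        + (starRingEnd ℂ (z i) * z i) * (star T ⬝ᵥ (ρ *ᵥ T)) := by
    intro i
    have h1 : star (u i) ⬝ᵥ (ρ *ᵥ u i) = star T ⬝ᵥ ((M i * ρ * (M i)ᴴ) *ᵥ T) := by
      rw [hstaru i]
      show star T ᵥ* M i ⬝ᵥ (ρ *ᵥ ((M i)ᴴ *ᵥ T)) = _
      rw [mulVec_mulVec, ← dotProduct_mulVec, mulVec_mulVec, ← mul_assoc]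
    rw [hv]
    simp only [star_sub, star_smul, mulVec_sub, mulVec_smul, sub_dotProduct,
      dotProduct_sub, smul_dotProduct, dotProduct_smul, smul_eq_mul, h1,
      RCLike.star_def, Complex.conj_conj]
    ring
  -- cross-term sums
  have hA : ∑ i, starRingEnd ℂ (z i) * (star (u i) ⬝ᵥ (ρ *ᵥ T)) = star T ⬝ᵥ (ρ *ᵥ T) := by
    calc ∑ i, starRingEnd ℂ (z i) * (star (u i) ⬝ᵥ (ρ *ᵥ T))
        = ∑ i, star (z i • u i) ⬝ᵥ (ρ *ᵥ T) := by
          simp_rw [star_smul, smul_dotProduct, smul_eq_mul, RCLike.star_def]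
      _ = star (∑ i, z i • u i) ⬝ᵥ (ρ *ᵥ T) := by
          rw [← aux_sum_dotProduct]
          congr 1
          ext j
          simp
      _ = star T ⬝ᵥ (ρ *ᵥ T) := by rw [hzu]
  have hB : ∑ i, z i * (star T ⬝ᵥ (ρ *ᵥ u i)) = star T ⬝ᵥ (ρ *ᵥ T) := by
    calc ∑ i, z i * (star T ⬝ᵥ (ρ *ᵥ u i))
        = ∑ i, star T ⬝ᵥ (ρ *ᵥ (z i • u i)) := by
          simp_rw [mulVec_smul, dotProduct_smul, smul_eq_mul]
      _ = star T ⬝ᵥ (ρ *ᵥ (∑ i, z i • u i)) := by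
          rw [aux_mulVec_sum, aux_dotProduct_sum]
      _ = star T ⬝ᵥ (ρ *ᵥ T) := by rw [hzu]
  -- assemble
  simp_rw [hterm, hexp]
  rw [Finset.sum_add_distrib, Finset.sum_sub_distrib, Finset.sum_sub_distrib,
    hA, hB, ← Finset.sum_mul, hzz, one_mul, aux_sum_mulVec, aux_dotProduct_sum]
  ring
end

section
/- (Lemma 2) Let H be a finite-dimensional complex Hilbert space, |T⟩ ∈ H a unit vector, and M_0, …, M_{n-1} Kraus operators (∑_i M_i† M_i = I) satisfying M_i |T⟩ = z_i |T⟩ for complex numbers z_i. The quantum channel $(ρ) = ∑_i M_i ρ M_i† strictly increases the target fidelity, F($(ρ), T) − F(ρ, T) > 0, for every density operator ρ ≠ |T⟩⟨T|, if and only if the vectors M_0†|T⟩, …, M_{n-1}†|T⟩ span H. -/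
open Matrix Complex ComplexOrder

lemma myVecMulVec_mulVec {d : ℕ} (a b x : Fin d → ℂ) :
    vecMulVec a b *ᵥ x = (b ⬝ᵥ x) • a := by
  ext i
  simp [vecMulVec_apply, mulVec, dotProduct, Finset.mul_sum, mul_comm, mul_left_comm]

lemma mySum_mulVec {d n : ℕ} (A : Fin n → Matrix (Fin d) (Fin d) ℂ) (x : Fin d → ℂ) :
    (∑ i, A i) *ᵥ x = ∑ i, A i *ᵥ x := by
  ext j
  simp [mulVec, dotProduct, Matrix.sum_apply, Finset.sum_apply, Finset.sum_mul]
  rw [Finset.sum_comm]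

lemma myDotProduct_sum {d n : ℕ} (u : Fin d → ℂ) (f : Fin n → Fin d → ℂ) :
    u ⬝ᵥ (∑ i, f i) = ∑ i, u ⬝ᵥ f i := by
  simp [dotProduct, Finset.sum_apply, Finset.mul_sum]
  rw [Finset.sum_comm]

lemma myTrace_vecMulVec {d : ℕ} (a b : Fin d → ℂ) :
    (vecMulVec a b).trace = a ⬝ᵥ b := by
  simp [Matrix.trace, Matrix.diag, vecMulVec_apply, dotProduct]

lemma myVecMulVec_star_posSemidef {d : ℕ} (a : Fin d → ℂ) :
    (vecMulVec a (star a)).PosSemidef := by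
  rw [posSemidef_iff_dotProduct_mulVec]
  constructor
  · ext i j
    simp [conjTranspose_apply, vecMulVec_apply, mul_comm]
  · intro y
    rw [myVecMulVec_mulVec, dotProduct_smul]
    rw [smul_eq_mul, star_dotProduct y a]
    exact mul_star_self_nonneg _


lemma myMulVec_sum {d n : ℕ} (A : Matrix (Fin d) (Fin d) ℂ) (f : Fin n → Fin d → ℂ) :
    A *ᵥ (∑ i, f i) = ∑ i, A *ᵥ f i := by
  ext j
  simp [mulVec, dotProduct, Finset.sum_apply, Finset.mul_sum]
  rw [Finset.sum_comm]

lemma mySum_dotProduct {d n : ℕ} (f : Fin n → Fin d → ℂ) (x : Fin d → ℂ) :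
    (∑ i, f i) ⬝ᵥ x = ∑ i, f i ⬝ᵥ x := by
  simp [dotProduct, Finset.sum_apply, Finset.sum_mul]
  rw [Finset.sum_comm]


lemma myPosSemidef_real_smul {d : ℕ} {A : Matrix (Fin d) (Fin d) ℂ}
    (hA : A.PosSemidef) {r : ℝ} (hr : 0 ≤ r) : ((r : ℂ) • A).PosSemidef := by
  rw [posSemidef_iff_dotProduct_mulVec]
  constructor
  · show ((r : ℂ) • A)ᴴ = (r : ℂ) • A
    rw [conjTranspose_smul, Complex.star_def, Complex.conj_ofReal, hA.1.eq]
  · intro y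
    rw [smul_mulVec, dotProduct_smul, smul_eq_mul]
    exact mul_nonneg (Complex.zero_le_real.mpr hr) (hA.dotProduct_mulVec_nonneg y)

/-- **Lemma 2.** The channel `ρ ↦ ∑ i, M i * ρ * (M i)ᴴ` with Kraus operators satisfying the
completeness relation and the fixed-point condition with respect to a unit vector `T` strictly
increases the target fidelity `F(ρ, T) = ⟨T|ρ|T⟩` for every density operator `ρ ≠ |T⟩⟨T|`
if and only if the vectors `(M i)ᴴ *ᵥ T` span the whole space. -/
theorem strict_fidelity_increase_iff_span {d n : ℕ}
    (M : Fin n → Matrix (Fin d) (Fin d) ℂ)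
    (T : Fin d → ℂ) (hT : star T ⬝ᵥ T = 1)
    (hM : ∑ i, (M i)ᴴ * M i = 1)
    (z : Fin n → ℂ) (hz : ∀ i, M i *ᵥ T = z i • T) :
    (∀ ρ : Matrix (Fin d) (Fin d) ℂ, ρ.PosSemidef → ρ.trace = 1 →
        ρ ≠ vecMulVec T (star T) →
        star T ⬝ᵥ (ρ *ᵥ T) < star T ⬝ᵥ ((∑ i, M i * ρ * (M i)ᴴ) *ᵥ T)) ↔
      Submodule.span ℂ (Set.range fun i => (M i)ᴴ *ᵥ T) = ⊤ := by
  set v : Fin n → Fin d → ℂ := fun i => (M i)ᴴ *ᵥ T with hv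
  set w : Fin n → Fin d → ℂ := fun i => v i - star (z i) • T with hw
  -- basic facts
  have hTv : ∀ i, star T ⬝ᵥ v i = star (z i) := by
    intro i
    show star T ⬝ᵥ ((M i)ᴴ *ᵥ T) = star (z i)
    rw [dotProduct_mulVec, ← star_mulVec, hz i, star_smul, smul_dotProduct, hT,
      smul_eq_mul, mul_one]
  have hsum_v : ∑ i, z i • v i = T := by
    have h1 : ∀ i, z i • v i = ((M i)ᴴ * M i) *ᵥ T := by
      intro i
      rw [← mulVec_mulVec, hz i, mulVec_smul]
    calc ∑ i, z i • v i = ∑ i, ((M i)ᴴ * M i) *ᵥ T := by simp_rw [h1]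
      _ = (∑ i, (M i)ᴴ * M i) *ᵥ T := (mySum_mulVec _ _).symm
      _ = T := by rw [hM, one_mulVec]
  have hz2 : ∑ i, z i * star (z i) = 1 := by
    have := congrArg (fun y => star T ⬝ᵥ y) hsum_v
    simpa [myDotProduct_sum, dotProduct_smul, hTv, hT] using this
  have hTw : ∀ i, star T ⬝ᵥ w i = 0 := by
    intro i
    simp [hw, dotProduct_sub, dotProduct_smul, hTv, hT]
  have hsum_w : ∑ i, z i • w i = 0 := by
    have : ∑ i, z i • w i = (∑ i, z i • v i) - ∑ i, (z i * star (z i)) • T := by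
      simp [hw, smul_sub, Finset.sum_sub_distrib, smul_smul]
    rw [this, hsum_v, ← Finset.sum_smul, hz2, one_smul, sub_self]
  have hviw : ∀ i, v i = star (z i) • T + w i := by
    intro i; simp [hw]
  -- the key identity
  have key : ∀ ρ : Matrix (Fin d) (Fin d) ℂ,
      star T ⬝ᵥ ((∑ i, M i * ρ * (M i)ᴴ) *ᵥ T)
        = star T ⬝ᵥ (ρ *ᵥ T) + ∑ i, star (w i) ⬝ᵥ (ρ *ᵥ w i) := by
    intro ρ
    have h1 : ∀ i, (M i * ρ * (M i)ᴴ) *ᵥ T = M i *ᵥ (ρ *ᵥ v i) := by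
      intro i
      rw [← mulVec_mulVec, ← mulVec_mulVec]
    have h2 : ∀ i, star T ⬝ᵥ (M i *ᵥ (ρ *ᵥ v i)) = star (v i) ⬝ᵥ (ρ *ᵥ v i) := by
      intro i
      rw [dotProduct_mulVec]
      congr 1
      show star T ᵥ* M i = star ((M i)ᴴ *ᵥ T)
      rw [star_mulVec, conjTranspose_conjTranspose]
    have h3 : ∀ i, star (v i) ⬝ᵥ (ρ *ᵥ v i)
        = (z i * star (z i)) * (star T ⬝ᵥ (ρ *ᵥ T))
          + (star T ⬝ᵥ (ρ *ᵥ (z i • w i)))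
          + (star (z i • w i) ⬝ᵥ (ρ *ᵥ T))
          + star (w i) ⬝ᵥ (ρ *ᵥ w i) := by
      intro i
      rw [hviw i]
      simp only [mulVec_add, mulVec_smul, dotProduct_add, add_dotProduct, star_add,
        star_smul, smul_dotProduct, dotProduct_smul, smul_eq_mul, star_star]
      ring
    rw [mySum_mulVec, myDotProduct_sum]
    simp_rw [h1, h2, h3]
    rw [Finset.sum_add_distrib, Finset.sum_add_distrib, Finset.sum_add_distrib]
    have e1 : ∑ i, (z i * star (z i)) * (star T ⬝ᵥ (ρ *ᵥ T)) = star T ⬝ᵥ (ρ *ᵥ T) := by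
      rw [← Finset.sum_mul, hz2, one_mul]
    have e2 : ∑ i, star T ⬝ᵥ (ρ *ᵥ (z i • w i)) = 0 := by
      rw [← myDotProduct_sum, ← myMulVec_sum, hsum_w, mulVec_zero, dotProduct_zero]
    have e3 : ∑ i, star (z i • w i) ⬝ᵥ (ρ *ᵥ T) = 0 := by
      rw [← mySum_dotProduct]
      have : ∑ i, star (z i • w i) = star (∑ i, z i • w i) := by
        rw [star_sum]
      rw [this, hsum_w, star_zero, zero_dotProduct]
    rw [e1, e2, e3, add_zero, add_zero]
  constructor
  · -- strict increase ⇒ span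
    intro h
    by_contra hspan
    obtain ⟨f, hf0, hfmap⟩ := Submodule.exists_dual_map_eq_bot_of_lt_top
      (lt_top_iff_ne_top.mpr hspan) inferInstance
    set c : Fin d → ℂ := fun j => f (fun k => if j = k then 1 else 0) with hc
    have hfc : ∀ y : Fin d → ℂ, f y = y ⬝ᵥ c := by
      intro y
      conv_lhs => rw [pi_eq_sum_univ y, map_sum]
      simp only [_root_.map_smul, smul_eq_mul]
      rfl
    have hcne : c ≠ 0 := by
      intro h0
      apply hf0
      apply LinearMap.ext
      intro y
      rw [hfc, h0, dotProduct_zero, LinearMap.zero_apply]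
    have hfv : ∀ i, v i ⬝ᵥ c = 0 := by
      intro i
      rw [← hfc]
      have hmem : f (v i) ∈ Submodule.map f (Submodule.span ℂ (Set.range v)) :=
        ⟨v i, Submodule.subset_span ⟨i, rfl⟩, rfl⟩
      rw [hfmap] at hmem
      exact hmem
    set x : Fin d → ℂ := star c with hxdef
    have hxne : x ≠ 0 := star_ne_zero.mpr hcne
    have hcx : star x = c := star_star c
    have hcT : c ⬝ᵥ T = 0 := by
      rw [← hsum_v, myDotProduct_sum]
      apply Finset.sum_eq_zero
      intro i _
      rw [dotProduct_smul, dotProduct_comm, hfv i, smul_zero]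
    have hcw : ∀ i, c ⬝ᵥ w i = 0 := by
      intro i
      show c ⬝ᵥ (v i - star (z i) • T) = 0
      rw [dotProduct_sub, dotProduct_smul, dotProduct_comm, hfv i, hcT, smul_zero, sub_zero]
    have hTx : star T ⬝ᵥ x = 0 := by
      rw [hxdef, star_dotProduct_star, hcT, star_zero]
    -- the norm of x
    set s : ℂ := star x ⬝ᵥ x with hsdef
    have hs_nonneg : 0 ≤ s := dotProduct_star_self_nonneg x
    have hs_ne : s ≠ 0 := by
      intro h0
      exact hxne (dotProduct_star_self_eq_zero.mp h0)
    set r : ℝ := s.re with hrdef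
    have hsr : s = (r : ℂ) := by
      obtain ⟨h1, h2⟩ := Complex.nonneg_iff.mp hs_nonneg
      exact Complex.ext rfl h2.symm
    have hr0 : 0 < r := by
      rcases lt_or_eq_of_le ((Complex.zero_le_real).mp (hsr ▸ hs_nonneg)) with h | h
      · exact h
      · exact absurd (by rw [hsr, ← h, Complex.ofReal_zero]) hs_ne
    -- the counterexample density matrix
    set ρ : Matrix (Fin d) (Fin d) ℂ :=
      ((2⁻¹ : ℝ) : ℂ) • vecMulVec T (star T) + (((2 * r)⁻¹ : ℝ) : ℂ) • vecMulVec x (star x)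
      with hρdef
    have hρPSD : ρ.PosSemidef := by
      refine Matrix.PosSemidef.add ?_ ?_
      · exact myPosSemidef_real_smul (myVecMulVec_star_posSemidef T) (by norm_num)
      · exact myPosSemidef_real_smul (myVecMulVec_star_posSemidef x) (by positivity)
    have hρtr : ρ.trace = 1 := by
      rw [hρdef, trace_add, trace_smul, trace_smul, myTrace_vecMulVec, myTrace_vecMulVec,
        dotProduct_comm T (star T), hT, dotProduct_comm x (star x), ← hsdef, hsr]
      rw [smul_eq_mul, smul_eq_mul, mul_one]
      rw [← Complex.ofReal_mul]
      have : (2 * r)⁻¹ * r = 2⁻¹ := by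
        field_simp
      rw [this]
      norm_num
    have hρx : ρ *ᵥ x = ((2⁻¹ : ℝ) : ℂ) • x := by
      rw [hρdef, add_mulVec, smul_mulVec, smul_mulVec,
        myVecMulVec_mulVec, myVecMulVec_mulVec, hTx, ← hsdef, hsr]
      simp only [zero_smul, smul_zero, zero_add, smul_smul]
      rw [← Complex.ofReal_mul]
      have : (2 * r)⁻¹ * r = 2⁻¹ := by
        field_simp
      rw [this]
    have hρne : ρ ≠ vecMulVec T (star T) := by
      intro heq
      have h1 : ρ *ᵥ x = (vecMulVec T (star T)) *ᵥ x := by rw [heq]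
      rw [hρx, myVecMulVec_mulVec, hTx, zero_smul] at h1
      have : x = 0 := by
        have h2 := congrArg (fun y => ((2 : ℝ) : ℂ) • y) h1
        simpa [smul_smul, ← Complex.ofReal_mul] using h2
      exact hxne this
    have hρw : ∀ i, ρ *ᵥ w i = 0 := by
      intro i
      rw [hρdef, add_mulVec, smul_mulVec, smul_mulVec,
        myVecMulVec_mulVec, myVecMulVec_mulVec, hTw i, hcx, hcw i]
      simp
    have := h ρ hρPSD hρtr hρne
    rw [key ρ] at this
    have hzero : ∑ i, star (w i) ⬝ᵥ (ρ *ᵥ w i) = 0 := by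
      apply Finset.sum_eq_zero
      intro i _
      rw [hρw i, dotProduct_zero]
    rw [hzero, add_zero] at this
    exact lt_irrefl _ this
  · -- span ⇒ strict increase
    intro hspan ρ hρ htr hne
    rw [key ρ]
    have hnn : ∀ i ∈ Finset.univ, (0:ℂ) ≤ star (w i) ⬝ᵥ (ρ *ᵥ w i) := fun i _ => hρ.dotProduct_mulVec_nonneg (w i)
    have hS : 0 ≤ ∑ i, star (w i) ⬝ᵥ (ρ *ᵥ w i) := Finset.sum_nonneg hnn
    have hSne : ∑ i, star (w i) ⬝ᵥ (ρ *ᵥ w i) ≠ 0 := by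
      intro hS0
      have hterm : ∀ i, star (w i) ⬝ᵥ (ρ *ᵥ w i) = 0 := by
        intro i
        exact (Finset.sum_eq_zero_iff_of_nonneg hnn).mp hS0 i (Finset.mem_univ i)
      have hρw : ∀ i, ρ *ᵥ w i = 0 := fun i =>
        (hρ.dotProduct_mulVec_zero_iff (w i)).mp (hterm i)
      -- ρ agrees with vecMulVec (ρ *ᵥ T) (star T) on all v i
      set u : Fin d → ℂ := ρ *ᵥ T with hu
      set σ : Matrix (Fin d) (Fin d) ℂ := vecMulVec u (star T) with hσ
      have hagree : ∀ i, (ρ - σ) *ᵥ v i = 0 := by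
        intro i
        rw [sub_mulVec]
        have h1 : ρ *ᵥ v i = star (z i) • u := by
          rw [hviw i, mulVec_add, mulVec_smul, hρw i, add_zero, hu]
        have h2 : σ *ᵥ v i = star (z i) • u := by
          rw [hσ, myVecMulVec_mulVec, hTv i]
        rw [h1, h2, sub_self]
      have hρσ : ρ = σ := by
        have hker : Submodule.span ℂ (Set.range v) ≤ LinearMap.ker (ρ - σ).mulVecLin := by
          rw [Submodule.span_le]
          rintro _ ⟨i, rfl⟩
          exact hagree i
        rw [hspan, top_le_iff] at hker
        have hf0 : (ρ - σ).mulVecLin = 0 := LinearMap.ker_eq_top.mp hker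
        have hAB : ρ - σ = 0 := by
          ext i j
          have := congrFun (congrArg (fun g => g (Pi.single j 1)) (congrArg DFunLike.coe hf0)) i
          simpa [Matrix.mulVecLin_apply] using this
        exact sub_eq_zero.mp hAB
      -- σ is Hermitian, so u is a multiple of T
      have hherm : σᴴ = σ := by rw [← hρσ]; exact hρ.1.eq
      have hσH : σᴴ = vecMulVec T (star u) := by
        ext i j
        simp [hσ, conjTranspose_apply, vecMulVec_apply, mul_comm]
      have huT : u = (star u ⬝ᵥ T) • T := by
        have h1 : σ *ᵥ T = u := by rw [hσ, myVecMulVec_mulVec, hT, one_smul]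
        have h2 : σ *ᵥ T = (star u ⬝ᵥ T) • T := by
          rw [← hherm, hσH, myVecMulVec_mulVec]
        exact h1.symm.trans h2
      -- trace gives the multiple
      have htrσ : σ.trace = (star u ⬝ᵥ T) := by
        rw [hσ, myTrace_vecMulVec]
        conv_lhs => rw [huT]
        rw [smul_dotProduct, dotProduct_comm T (star T), hT, smul_eq_mul, mul_one]
      have hc1 : star u ⬝ᵥ T = 1 := by rw [← htrσ, ← hρσ, htr]
      have : ρ = vecMulVec T (star T) := by
        rw [hρσ, hσ, huT, hc1, one_smul]
      exact hne this
    have hpos : 0 < ∑ i, star (w i) ⬝ᵥ (ρ *ᵥ w i) := lt_of_le_of_ne hS (Ne.symm hSne)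
    exact lt_add_of_pos_right _ hpos
end

section
/- Let H be a finite-dimensional complex Hilbert space, {E_i}_{i=0,…,n-1} a POVM on H (each E_i positive semidefinite, ∑_i E_i = I), and |T⟩ ∈ H a unit vector such that the vectors E_0|T⟩, …, E_{n-1}|T⟩ span H. For each i choose a unitary U_i on H such that U_i √E_i |T⟩ is proportional to |T⟩ whenever E_i|T⟩ ≠ 0 (and U_i arbitrary otherwise), and set M_i = U_i √E_i. Then the M_i form a set of Kraus operators (∑_i M_i† M_i = I) satisfying the fixed-point condition M_i|T⟩ = z_i|T⟩ for some z_i ∈ ℂ, and the vectors M_0†|T⟩, …, M_{n-1}†|T⟩ span H. -/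
open Matrix Complex ComplexOrder

/-- The positive semidefinite square root of a positive semidefinite matrix
(the definition `Matrix.PosSemidef.sqrt` of the older Mathlib, since removed). -/
noncomputable def Matrix.PosSemidef.sqrt {n : Type*} [Fintype n] [DecidableEq n] {𝕜 : Type*}
    [RCLike 𝕜] {A : Matrix n n 𝕜} (hA : A.PosSemidef) : Matrix n n 𝕜 :=
  (hA.1.eigenvectorUnitary : Matrix n n 𝕜) * diagonal ((↑) ∘ (√·) ∘ hA.1.eigenvalues) *
    (star (hA.1.eigenvectorUnitary : Matrix n n 𝕜))

theorem Matrix.PosSemidef.posSemidef_sqrt {m : Type*} [Fintype m] [DecidableEq m]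
    {A : Matrix m m ℂ} (hA : A.PosSemidef) : hA.sqrt.PosSemidef := by
  unfold Matrix.PosSemidef.sqrt
  have hD : (diagonal (((↑) ∘ (√·) ∘ hA.1.eigenvalues : m → ℂ))).PosSemidef :=
    PosSemidef.diagonal (fun i => by
      simp only [Function.comp_apply]
      exact Complex.zero_le_real.mpr (Real.sqrt_nonneg _))
  simpa [star_eq_conjTranspose] using
    hD.mul_mul_conjTranspose_same (hA.1.eigenvectorUnitary : Matrix m m ℂ)

theorem Matrix.PosSemidef.sqrt_mul_self {m : Type*} [Fintype m] [DecidableEq m]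
    {A : Matrix m m ℂ} (hA : A.PosSemidef) : hA.sqrt * hA.sqrt = A := by
  have hu : star (hA.1.eigenvectorUnitary : Matrix m m ℂ) * (hA.1.eigenvectorUnitary : Matrix m m ℂ)
      = 1 := hA.1.eigenvectorUnitary.2.1
  conv_rhs => rw [hA.1.spectral_theorem]
  simp only [Unitary.conjStarAlgAut_apply, Matrix.PosSemidef.sqrt]
  calc _ = (hA.1.eigenvectorUnitary : Matrix m m ℂ) *
        (diagonal ((RCLike.ofReal ∘ (√·) ∘ hA.1.eigenvalues : m → ℂ)) *
          (star (hA.1.eigenvectorUnitary : Matrix m m ℂ) * (hA.1.eigenvectorUnitary : Matrix m m ℂ))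
          * diagonal ((RCLike.ofReal ∘ (√·) ∘ hA.1.eigenvalues : m → ℂ))) *
        star (hA.1.eigenvectorUnitary : Matrix m m ℂ) := by simp only [Matrix.mul_assoc]
    _ = _ := by
      rw [hu, Matrix.mul_one, diagonal_mul_diagonal]
      congr 3
      funext i
      simp only [Function.comp_apply]
      rw [← RCLike.ofReal_mul, Real.mul_self_sqrt (hA.eigenvalues_nonneg i)]

/-- **Construction of control channels from a POVM.** Given a POVM `{E i}` (positive semidefinite
operators summing to the identity) whose elements satisfy `Span {E i *ᵥ T} = ⊤` for a unit vector
`T`, and unitaries `U i` such that `U i * √(E i) *ᵥ T` is proportional to `T` whenever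
`E i *ᵥ T ≠ 0`, the operators `M i = U i * √(E i)` form a set of Kraus operators satisfying the
fixed-point condition with respect to `T`, and the vectors `(M i)ᴴ *ᵥ T` span the whole space. -/
theorem kraus_from_povm {d n : ℕ}
    (E : Fin n → Matrix (Fin d) (Fin d) ℂ)
    (hE : ∀ i, (E i).PosSemidef) (hEsum : ∑ i, E i = 1)
    (T : Fin d → ℂ) (hT : star T ⬝ᵥ T = 1)
    (hEspan : Submodule.span ℂ (Set.range fun i => E i *ᵥ T) = ⊤)
    (U : Fin n → Matrix (Fin d) (Fin d) ℂ)
    (hU : ∀ i, U i ∈ Matrix.unitaryGroup (Fin d) ℂ)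
    (hUT : ∀ i, E i *ᵥ T ≠ 0 → ∃ c : ℂ, (U i * (hE i).sqrt) *ᵥ T = c • T) :
    (∑ i, (U i * (hE i).sqrt)ᴴ * (U i * (hE i).sqrt) = 1) ∧
    (∀ i, ∃ zi : ℂ, (U i * (hE i).sqrt) *ᵥ T = zi • T) ∧
    Submodule.span ℂ (Set.range fun i => (U i * (hE i).sqrt)ᴴ *ᵥ T) = ⊤ := by
  have hMM : ∀ i, (U i * (hE i).sqrt)ᴴ * (U i * (hE i).sqrt) = E i := by
    intro i
    have hUU : (U i)ᴴ * U i = 1 := by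
      rw [← star_eq_conjTranspose]; exact (hU i).1
    have hS : ((hE i).sqrt)ᴴ = (hE i).sqrt := (hE i).posSemidef_sqrt.1
    calc (U i * (hE i).sqrt)ᴴ * (U i * (hE i).sqrt)
        = ((hE i).sqrt)ᴴ * ((U i)ᴴ * U i) * (hE i).sqrt := by
          simp [conjTranspose_mul, Matrix.mul_assoc]
      _ = E i := by rw [hUU, hS, Matrix.mul_one, (hE i).sqrt_mul_self]
  have h1 : ∑ i, (U i * (hE i).sqrt)ᴴ * (U i * (hE i).sqrt) = 1 := by
    simp_rw [hMM]; exact hEsum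
  have h2 : ∀ i, ∃ zi : ℂ, (U i * (hE i).sqrt) *ᵥ T = zi • T := by
    intro i
    by_cases h : E i *ᵥ T ≠ 0
    · exact hUT i h
    · push_neg at h
      refine ⟨0, ?_⟩
      have hS : ((hE i).sqrt)ᴴ = (hE i).sqrt := (hE i).posSemidef_sqrt.1
      have hsz : (hE i).sqrt *ᵥ T = 0 := by
        have hdp : star ((hE i).sqrt *ᵥ T) ⬝ᵥ ((hE i).sqrt *ᵥ T) = 0 := by
          rw [star_mulVec, hS, ← dotProduct_mulVec, mulVec_mulVec,
            (hE i).sqrt_mul_self, h, dotProduct_zero]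
        exact dotProduct_star_self_eq_zero.mp hdp
      rw [← mulVec_mulVec, hsz, mulVec_zero, zero_smul]
  refine ⟨h1, h2, ?_⟩
  have hle : Submodule.span ℂ (Set.range fun i => E i *ᵥ T)
      ≤ Submodule.span ℂ (Set.range fun i => (U i * (hE i).sqrt)ᴴ *ᵥ T) := by
    rw [Submodule.span_le]
    rintro _ ⟨i, rfl⟩
    obtain ⟨z, hz⟩ := h2 i
    have : z • ((U i * (hE i).sqrt)ᴴ *ᵥ T) = E i *ᵥ T := by
      rw [← mulVec_smul, ← hz, mulVec_mulVec, hMM i]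
    show E i *ᵥ T ∈ _
    rw [← this]
    exact Submodule.smul_mem _ z (Submodule.subset_span ⟨i, rfl⟩)
  exact top_le_iff.mp (hEspan ▸ hle)
end

section
/- Let H = ℂ² with orthonormal basis {|0⟩, |1⟩}, target state |T⟩ = (|0⟩+|1⟩)/√2, and for β ∈ ℝ define M_0 = e^{−iσ_y(β−π/4)} (sin β |0⟩⟨0| + cos β |1⟩⟨1|) and M_1 = e^{+iσ_y(β−π/4)} (cos β |0⟩⟨0| + sin β |1⟩⟨1|), where σ_y = i|1⟩⟨0| − i|0⟩⟨1|. Then M_0† M_0 + M_1† M_1 = I, and there exist complex numbers z_0, z_1 with M_0|T⟩ = z_0|T⟩ and M_1|T⟩ = z_1|T⟩. -/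
open Matrix Complex NormedSpace

private lemma diag_fin_two (a b : ℂ) :
    (Matrix.diagonal ![a, b] : Matrix (Fin 2) (Fin 2) ℂ) = !![a, 0; 0, b] := by
  ext i j
  fin_cases i <;> fin_cases j <;> simp [Matrix.diagonal]

private lemma exp_smul_sigmay (θ : ℂ) :
    exp (θ • (!![0, -Complex.I; Complex.I, 0] : Matrix (Fin 2) (Fin 2) ℂ)) =
      !![Complex.cosh θ, -Complex.I * Complex.sinh θ;
         Complex.I * Complex.sinh θ, Complex.cosh θ] := by
  set V : Matrix (Fin 2) (Fin 2) ℂ := !![1, 1; Complex.I, -Complex.I] with hVdef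
  have hU : IsUnit V := by
    rw [Matrix.isUnit_iff_isUnit_det]
    simp [hVdef, Matrix.det_fin_two_of, isUnit_iff_ne_zero, Complex.ext_iff]
    norm_num
  have hVinv : V⁻¹ = !![1/2, -Complex.I/2; 1/2, Complex.I/2] := by
    apply Matrix.inv_eq_right_inv
    ext i j
    fin_cases i <;> fin_cases j <;>
      simp [hVdef, Matrix.mul_apply, Fin.sum_univ_two] <;> ring_nf <;>
      simp [Complex.I_sq] <;> ring
  have hconj : θ • (!![0, -Complex.I; Complex.I, 0] : Matrix (Fin 2) (Fin 2) ℂ) =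
      V * Matrix.diagonal ![θ, -θ] * V⁻¹ := by
    rw [hVinv, diag_fin_two]
    ext i j
    fin_cases i <;> fin_cases j <;>
      simp [hVdef, Matrix.mul_apply, Fin.sum_univ_two] <;> ring_nf <;>
      simp [Complex.I_sq] <;> ring
  rw [hconj, Matrix.exp_conj V _ hU, Matrix.exp_diagonal, hVinv]
  have hexp : exp (![θ, -θ]) = ![Complex.exp θ, Complex.exp (-θ)] := by
    funext i
    fin_cases i <;> simp [Pi.exp_def, Complex.exp_eq_exp_ℂ]
  rw [hexp, diag_fin_two]
  ext i j
  fin_cases i <;> fin_cases j <;>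
    simp [hVdef, Matrix.mul_apply, Fin.sum_univ_two, Complex.cosh, Complex.sinh] <;>
    ring_nf <;> simp [Complex.I_sq] <;> ring

private lemma exp_rot_neg (r : ℝ) :
    exp ((-Complex.I * (r : ℂ)) • (!![0, -Complex.I; Complex.I, 0] : Matrix (Fin 2) (Fin 2) ℂ)) =
      !![(Real.cos r : ℂ), -(Real.sin r : ℂ); (Real.sin r : ℂ), (Real.cos r : ℂ)] := by
  rw [exp_smul_sigmay]
  have h1 : Complex.cosh (-Complex.I * (r : ℂ)) = (Real.cos r : ℂ) := by
    rw [show -Complex.I * (r : ℂ) = -((r : ℂ) * Complex.I) by ring, Complex.cosh_neg,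
      Complex.cosh_mul_I, Complex.ofReal_cos]
  have h2 : Complex.sinh (-Complex.I * (r : ℂ)) = -((Real.sin r : ℂ) * Complex.I) := by
    rw [show -Complex.I * (r : ℂ) = -((r : ℂ) * Complex.I) by ring, Complex.sinh_neg,
      Complex.sinh_mul_I, Complex.ofReal_sin]
  rw [h1, h2]
  ext i j
  fin_cases i <;> fin_cases j <;> simp <;> ring_nf <;> simp [Complex.I_sq] <;> ring

private lemma exp_rot_pos (r : ℝ) :
    exp ((Complex.I * (r : ℂ)) • (!![0, -Complex.I; Complex.I, 0] : Matrix (Fin 2) (Fin 2) ℂ)) =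
      !![(Real.cos r : ℂ), (Real.sin r : ℂ); -(Real.sin r : ℂ), (Real.cos r : ℂ)] := by
  rw [exp_smul_sigmay]
  have h1 : Complex.cosh (Complex.I * (r : ℂ)) = (Real.cos r : ℂ) := by
    rw [show Complex.I * (r : ℂ) = (r : ℂ) * Complex.I by ring,
      Complex.cosh_mul_I, Complex.ofReal_cos]
  have h2 : Complex.sinh (Complex.I * (r : ℂ)) = (Real.sin r : ℂ) * Complex.I := by
    rw [show Complex.I * (r : ℂ) = (r : ℂ) * Complex.I by ring,
      Complex.sinh_mul_I, Complex.ofReal_sin]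
  rw [h1, h2]
  ext i j
  fin_cases i <;> fin_cases j <;> simp <;> ring_nf <;> simp [Complex.I_sq] <;> ring


/-- **Example 1 (fixed-point property).** For the qubit target `|T⟩ = (|0⟩+|1⟩)/√2` and any
`β ∈ ℝ`, the operators `M₀ = e^{−iσ_y(β−π/4)}(sin β |0⟩⟨0| + cos β |1⟩⟨1|)` and
`M₁ = e^{+iσ_y(β−π/4)}(cos β |0⟩⟨0| + sin β |1⟩⟨1|)` satisfy the completeness relation
`M₀ᴴM₀ + M₁ᴴM₁ = 1` and the fixed-point condition `Mᵢ|T⟩ = zᵢ|T⟩`. -/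
theorem example1_kraus_fixed_point (β : ℝ) :
    let σy : Matrix (Fin 2) (Fin 2) ℂ := !![0, -Complex.I; Complex.I, 0]
    let P0 : Matrix (Fin 2) (Fin 2) ℂ := !![1, 0; 0, 0]
    let P1 : Matrix (Fin 2) (Fin 2) ℂ := !![0, 0; 0, 1]
    let M0 : Matrix (Fin 2) (Fin 2) ℂ :=
      exp ((-Complex.I * (((β : ℂ)) - (Real.pi : ℂ) / 4)) • σy) *
        ((Real.sin β : ℂ) • P0 + (Real.cos β : ℂ) • P1)
    let M1 : Matrix (Fin 2) (Fin 2) ℂ :=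
      exp ((Complex.I * (((β : ℂ)) - (Real.pi : ℂ) / 4)) • σy) *
        ((Real.cos β : ℂ) • P0 + (Real.sin β : ℂ) • P1)
    let T : Fin 2 → ℂ := ((Real.sqrt 2 : ℂ))⁻¹ • ![1, 1]
    (M0ᴴ * M0 + M1ᴴ * M1 = 1) ∧
    (∃ z0 : ℂ, M0 *ᵥ T = z0 • T) ∧ (∃ z1 : ℂ, M1 *ᵥ T = z1 • T) := by
  
  intro σy P0 P1 M0 M1 T
  set r : ℝ := β - Real.pi / 4 with hr
  have hc : ((β : ℂ)) - (Real.pi : ℂ) / 4 = (r : ℂ) := by push_cast [hr]; ring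
  have hM0 : M0 = !![(Real.cos r : ℂ) * (Real.sin β : ℂ), -(Real.sin r : ℂ) * (Real.cos β : ℂ);
      (Real.sin r : ℂ) * (Real.sin β : ℂ), (Real.cos r : ℂ) * (Real.cos β : ℂ)] := by
    show NormedSpace.exp _ * _ = _
    rw [hc, exp_rot_neg]
    ext i j
    fin_cases i <;> fin_cases j <;>
      simp [σy, P0, P1, Matrix.mul_apply, Fin.sum_univ_two] <;> ring
  have hM1 : M1 = !![(Real.cos r : ℂ) * (Real.cos β : ℂ), (Real.sin r : ℂ) * (Real.sin β : ℂ);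
      -(Real.sin r : ℂ) * (Real.cos β : ℂ), (Real.cos r : ℂ) * (Real.sin β : ℂ)] := by
    show NormedSpace.exp _ * _ = _
    rw [hc, exp_rot_pos]
    ext i j
    fin_cases i <;> fin_cases j <;>
      simp [σy, P0, P1, Matrix.mul_apply, Fin.sum_univ_two] <;> ring
  have hsr := Real.sin_sq_add_cos_sq r
  have hsβ := Real.sin_sq_add_cos_sq β
  refine ⟨?_, ⟨(Real.sin (Real.pi / 4) : ℂ), ?_⟩, ⟨(Real.sin (Real.pi / 4) : ℂ), ?_⟩⟩
  · rw [hM0, hM1]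
    ext i j
    fin_cases i <;> fin_cases j <;>
      simp [Matrix.mul_apply, Fin.sum_univ_two, Matrix.one_apply, Complex.ext_iff,
        Complex.cos_ofReal_re, Complex.sin_ofReal_re] <;>
      first
        | ring1
        | linear_combination (Real.sin β ^ 2 + Real.cos β ^ 2) * hsr + hsβ
  · rw [hM0]
    have hsub : Real.sin β * Real.cos r - Real.cos β * Real.sin r = Real.sqrt 2 / 2 := by
      rw [← Real.sin_sub, show β - r = Real.pi / 4 by rw [hr]; ring, Real.sin_pi_div_four]
    have hsubC : Complex.sin (β : ℂ) * Complex.cos (r : ℂ) -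
        Complex.cos (β : ℂ) * Complex.sin (r : ℂ) = (Real.sqrt 2 : ℂ) / 2 := by
      exact_mod_cast congrArg (fun x : ℝ => (x : ℂ)) hsub
    have hadd : Real.cos β * Real.cos r + Real.sin β * Real.sin r = Real.sqrt 2 / 2 := by
      rw [← Real.cos_sub, show β - r = Real.pi / 4 by rw [hr]; ring, Real.cos_pi_div_four]
    have haddC : Complex.cos (β : ℂ) * Complex.cos (r : ℂ) +
        Complex.sin (β : ℂ) * Complex.sin (r : ℂ) = (Real.sqrt 2 : ℂ) / 2 := by
      exact_mod_cast congrArg (fun x : ℝ => (x : ℂ)) hadd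
    funext i
    fin_cases i <;>
      simp [T, Matrix.mulVec, dotProduct, Fin.sum_univ_two, smul_eq_mul] <;>
      first
        | linear_combination ((Real.sqrt 2 : ℂ))⁻¹ * hsubC
        | linear_combination ((Real.sqrt 2 : ℂ))⁻¹ * haddC
  · rw [hM1]
    have hsub : Real.sin β * Real.cos r - Real.cos β * Real.sin r = Real.sqrt 2 / 2 := by
      rw [← Real.sin_sub, show β - r = Real.pi / 4 by rw [hr]; ring, Real.sin_pi_div_four]
    have hsubC : Complex.sin (β : ℂ) * Complex.cos (r : ℂ) -
        Complex.cos (β : ℂ) * Complex.sin (r : ℂ) = (Real.sqrt 2 : ℂ) / 2 := by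
      exact_mod_cast congrArg (fun x : ℝ => (x : ℂ)) hsub
    have hadd : Real.cos β * Real.cos r + Real.sin β * Real.sin r = Real.sqrt 2 / 2 := by
      rw [← Real.cos_sub, show β - r = Real.pi / 4 by rw [hr]; ring, Real.cos_pi_div_four]
    have haddC : Complex.cos (β : ℂ) * Complex.cos (r : ℂ) +
        Complex.sin (β : ℂ) * Complex.sin (r : ℂ) = (Real.sqrt 2 : ℂ) / 2 := by
      exact_mod_cast congrArg (fun x : ℝ => (x : ℂ)) hadd
    funext i
    fin_cases i <;>
      simp [T, Matrix.mulVec, dotProduct, Fin.sum_univ_two, smul_eq_mul] <;>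
      first
        | linear_combination ((Real.sqrt 2 : ℂ))⁻¹ * haddC
        | linear_combination ((Real.sqrt 2 : ℂ))⁻¹ * hsubC
end

section
/- Let the system and controller each be a qubit (Hilbert space ℂ²), let U = exp(−(iλ/2)(σ_y⊗σ_y + σ_z⊗σ_z)) on ℂ²⊗ℂ² with λ ∈ ℝ, let the controller be initialized in |0_x⟩_c = (|0⟩_c + i|1⟩_c)/√2 (with (|0⟩_c,|1⟩_c) the eigenbasis of σ_y on the controller), and let |T⟩ = (|0⟩+|1⟩)/√2 be the system target. Define the channel $(ρ) = Tr_c[U (ρ ⊗ |0_x⟩_c⟨0_x|) U†]. Then for every density operator ρ on ℂ² and every n ∈ ℕ, the target fidelity satisfies F($^n(ρ), T) = 1 − (1 − F(ρ, T)) (1 − sin²λ)^n. -/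
open Matrix Complex ComplexOrder NormedSpace Kronecker

/-- Partial trace over the controller (second) tensor factor of an operator on `ℂ² ⊗ ℂ²`. -/
noncomputable def ptraceControl {d : ℕ} (A : Matrix (Fin d × Fin d) (Fin d × Fin d) ℂ) :
    Matrix (Fin d) (Fin d) ℂ :=
  Matrix.of fun i j => ∑ k, A (i, k) (j, k)

noncomputable section Ex1Aux

def Vm : Matrix (Fin 2 × Fin 2) (Fin 2 × Fin 2) ℂ :=
  Matrix.of fun p q =>
    if q = p then (if p.1 = 0 then 1 else -1)
    else if q = (p.1 + 1, p.2 + 1) then 1 else 0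

def dm (l : ℝ) : Fin 2 × Fin 2 → ℂ := fun p =>
  if p = (1, 0) then (l : ℂ) * Complex.I
  else if p = (1, 1) then -((l : ℂ) * Complex.I) else 0

lemma hV2 : Vm * ((2:ℂ)⁻¹ • Vm) = 1 := by
  ext ⟨i, k⟩ ⟨j, m⟩
  fin_cases i <;> fin_cases k <;> fin_cases j <;> fin_cases m <;>
    simp [Vm, Matrix.mul_apply, Fintype.sum_prod_type, Fin.sum_univ_two,
      Matrix.one_apply, Prod.ext_iff] <;> norm_num

lemma hVinv : Vm⁻¹ = (2:ℂ)⁻¹ • Vm := Matrix.inv_eq_right_inv hV2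

lemma hVunit : IsUnit Vm := by
  have := invertibleOfRightInverse (a := Vm) (b := (2:ℂ)⁻¹ • Vm) (h := hV2)
  exact isUnit_of_invertible Vm

lemma hAeq (l : ℝ) :
    (-Complex.I * (l : ℂ) / 2) •
      ((!![0, -Complex.I; Complex.I, 0] : Matrix (Fin 2) (Fin 2) ℂ) ⊗ₖ
          !![0, -Complex.I; Complex.I, 0] +
        (!![1, 0; 0, -1] : Matrix (Fin 2) (Fin 2) ℂ) ⊗ₖ !![1, 0; 0, -1]) =
      Vm * Matrix.diagonal (dm l) * Vm⁻¹ := by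
  rw [hVinv]
  ext ⟨i, k⟩ ⟨j, m⟩
  fin_cases i <;> fin_cases k <;> fin_cases j <;> fin_cases m <;>
    simp [Vm, dm, Matrix.mul_apply, Fintype.sum_prod_type, Fin.sum_univ_two,
      Matrix.diagonal, Prod.ext_iff] <;> ring

def Ue (l : ℝ) : Matrix (Fin 2 × Fin 2) (Fin 2 × Fin 2) ℂ :=
  Matrix.of fun p q =>
    if q = p then
      (if p.2 = p.1 then (1 + Complex.exp (-((l : ℂ) * Complex.I))) / 2
       else (1 + Complex.exp ((l : ℂ) * Complex.I)) / 2)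
    else if q = (p.1 + 1, p.2 + 1) then
      (if p.2 = p.1 then (1 - Complex.exp (-((l : ℂ) * Complex.I))) / 2
       else (1 - Complex.exp ((l : ℂ) * Complex.I)) / 2)
    else 0

lemma hUeq (l : ℝ) :
    NormedSpace.exp ((-Complex.I * (l : ℂ) / 2) •
      ((!![0, -Complex.I; Complex.I, 0] : Matrix (Fin 2) (Fin 2) ℂ) ⊗ₖ
          !![0, -Complex.I; Complex.I, 0] +
        (!![1, 0; 0, -1] : Matrix (Fin 2) (Fin 2) ℂ) ⊗ₖ !![1, 0; 0, -1])) = Ue l := by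
  rw [hAeq l, Matrix.exp_conj Vm (Matrix.diagonal (dm l)) hVunit, Matrix.exp_diagonal, hVinv]
  have hexp : NormedSpace.exp (dm l) = fun p => Complex.exp (dm l p) := by
    funext p
    rw [Pi.coe_exp, Complex.exp_eq_exp_ℂ]
  rw [hexp]
  ext ⟨i, k⟩ ⟨j, m⟩
  fin_cases i <;> fin_cases k <;> fin_cases j <;> fin_cases m <;>
    simp [Vm, dm, Ue, Matrix.mul_apply, Fintype.sum_prod_type, Fin.sum_univ_two,
      Matrix.diagonal, Prod.ext_iff, Complex.exp_zero] <;> ring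

end Ex1Aux

set_option maxHeartbeats 2000000 in
/-- **Example 1 (exponential fidelity gain).** For the coupling unitary
`U = exp(−(iλ/2)(σ_y⊗σ_y + σ_z⊗σ_z))`, a controller initialised in
`|0_x⟩_c = (|0⟩_c + i|1⟩_c)/√2`, where `(|0⟩_c, |1⟩_c)` is the eigenbasis of `σ_y`
(eigenvectors `v₊ = (1, i)/√2`, `v₋ = (1, −i)/√2` in the computational basis), and the
target `|T⟩ = (|0⟩+|1⟩)/√2`, the channel `$(ρ) = Tr_c[U (ρ ⊗ |0_x⟩⟨0_x|) Uᴴ]` satisfies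
`F($ⁿ(ρ), T) = 1 − (1 − F(ρ, T))(1 − sin²λ)ⁿ` for every density operator `ρ` and every `n`. -/
theorem example1_fidelity_formula (l : ℝ)
    (ρ : Matrix (Fin 2) (Fin 2) ℂ) (hρ : ρ.PosSemidef) (hρtr : ρ.trace = 1) :
    let σy : Matrix (Fin 2) (Fin 2) ℂ := !![0, -Complex.I; Complex.I, 0]
    let σz : Matrix (Fin 2) (Fin 2) ℂ := !![1, 0; 0, -1]
    let U : Matrix (Fin 2 × Fin 2) (Fin 2 × Fin 2) ℂ :=
      NormedSpace.exp ((-Complex.I * (l : ℂ) / 2) • (σy ⊗ₖ σy + σz ⊗ₖ σz))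
    let vplus : Fin 2 → ℂ := ((Real.sqrt 2 : ℂ))⁻¹ • ![1, Complex.I]
    let vminus : Fin 2 → ℂ := ((Real.sqrt 2 : ℂ))⁻¹ • ![1, -Complex.I]
    let ψc : Fin 2 → ℂ := ((Real.sqrt 2 : ℂ))⁻¹ • (vplus + Complex.I • vminus)
    let T : Fin 2 → ℂ := ((Real.sqrt 2 : ℂ))⁻¹ • ![1, 1]
    let chan : Matrix (Fin 2) (Fin 2) ℂ → Matrix (Fin 2) (Fin 2) ℂ :=
      fun σ => ptraceControl (U * (σ ⊗ₖ vecMulVec ψc (star ψc)) * Uᴴ)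
    ∀ n : ℕ, star T ⬝ᵥ (chan^[n] ρ *ᵥ T) =
      1 - (1 - star T ⬝ᵥ (ρ *ᵥ T)) * (((1 - Real.sin l ^ 2 : ℝ) : ℂ)) ^ n := by
  intro σy σz U vplus vminus ψc T chan
  have h2 : (Real.sqrt 2 : ℂ) * (Real.sqrt 2 : ℂ) = 2 := by
    norm_cast
    exact Real.mul_self_sqrt (by norm_num)
  have h2ne : (Real.sqrt 2 : ℂ) ≠ 0 := by
    simp [Real.sqrt_eq_zero']
  have hT : ∀ M : Matrix (Fin 2) (Fin 2) ℂ,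
      star T ⬝ᵥ (M *ᵥ T) = (M 0 0 + M 0 1 + M 1 0 + M 1 1) / 2 := by
    intro M
    unfold T
    simp [dotProduct, Matrix.mulVec, Fin.sum_univ_two, map_inv₀, Complex.conj_ofReal]
    field_simp
    linear_combination (-(M 0 0 + M 0 1 + M 1 0 + M 1 1)) * h2
  have hψ : ψc = ![(1 + Complex.I)/2, (1 + Complex.I)/2] := by
    unfold ψc vplus vminus
    funext i
    fin_cases i
    · simp
      field_simp
      linear_combination (-(1 + Complex.I)) * h2
    · simp
      field_simp
      linear_combination (-(1 + Complex.I)) * h2 + (-2:ℂ) * Complex.I_sq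
  have hP : vecMulVec ψc (star ψc) = Matrix.of (fun _ _ => (2:ℂ)⁻¹) := by
    rw [hψ]
    ext i j
    fin_cases i <;> fin_cases j <;>
    · simp [Matrix.vecMulVec_apply, Complex.star_def, map_div₀, map_add, Complex.conj_I]
      linear_combination (-(1:ℂ)/4) * Complex.I_sq
  have hU : U = Ue l := hUeq l
  have hem : Complex.exp (-((l:ℂ) * Complex.I)) = (Complex.exp ((l:ℂ) * Complex.I))⁻¹ :=
    Complex.exp_neg _
  have hene : Complex.exp ((l:ℂ) * Complex.I) ≠ 0 := Complex.exp_ne_zero _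
  have hcos : ((Real.cos l : ℝ) : ℂ) =
      (Complex.exp ((l:ℂ) * Complex.I) + (Complex.exp ((l:ℂ) * Complex.I))⁻¹) / 2 := by
    rw [Complex.ofReal_cos]
    rw [show Complex.cos (l:ℂ) = (Complex.exp ((l:ℂ) * Complex.I) +
      Complex.exp (-(l:ℂ) * Complex.I)) / 2 from rfl]
    rw [neg_mul, hem]
  have htr : ∀ σ : Matrix (Fin 2) (Fin 2) ℂ, (chan σ).trace = σ.trace := by
    intro σ
    unfold chan
    rw [hU, hP]
    simp [Matrix.trace, Matrix.diag, Fin.sum_univ_two, ptraceControl, Matrix.mul_apply,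
      Fintype.sum_prod_type, Matrix.kroneckerMap_apply, Matrix.conjTranspose_apply,
      Ue, Prod.ext_iff, Complex.star_def, _root_.map_div₀, _root_.map_add, _root_.map_sub, _root_.map_one, _root_.map_neg,
      _root_.map_mul, _root_.map_ofNat, ← Complex.exp_conj, Complex.conj_ofReal, Complex.conj_I]
    rw [hem] at *
    field_simp
    ring
  have hfid : ∀ σ : Matrix (Fin 2) (Fin 2) ℂ,
      star T ⬝ᵥ (chan σ *ᵥ T) =
        σ.trace - (σ.trace - star T ⬝ᵥ (σ *ᵥ T)) * ((Real.cos l : ℝ) : ℂ)^2 := by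
    intro σ
    rw [hT, hT]
    unfold chan
    rw [hU, hP, hcos]
    simp [Matrix.trace, Matrix.diag, Fin.sum_univ_two, ptraceControl, Matrix.mul_apply,
      Fintype.sum_prod_type, Matrix.kroneckerMap_apply, Matrix.conjTranspose_apply,
      Ue, Prod.ext_iff, Complex.star_def, _root_.map_div₀, _root_.map_add, _root_.map_sub,
      _root_.map_one, _root_.map_neg, _root_.map_mul, _root_.map_ofNat,
      ← Complex.exp_conj, Complex.conj_ofReal, Complex.conj_I]
    rw [hem]
    field_simp
    ring
  have htrn : ∀ n : ℕ, (chan^[n] ρ).trace = 1 := by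
    intro n
    induction n with
    | zero => simpa using hρtr
    | succ n ih => rw [Function.iterate_succ_apply', htr, ih]
  have hC : (((1 - Real.sin l ^ 2 : ℝ)) : ℂ) = ((Real.cos l : ℝ) : ℂ)^2 := by
    have : (1 - Real.sin l ^ 2 : ℝ) = Real.cos l ^ 2 := by
      rw [← Real.sin_sq_add_cos_sq l]; ring
    rw [this]; push_cast; ring
  intro n
  induction n with
  | zero => simp
  | succ n ih =>
    rw [Function.iterate_succ_apply', hfid, htrn n, ih, hC]
    ring
end

section
/- Let S be the swap operator on ℂ^d ⊗ ℂ^d, let λ ∈ ℝ, let U = exp(−iλS), and let the controller be initialized in the target state |T⟩_c where |T⟩ ∈ ℂ^d is a unit vector. Then the channel $(ρ) = Tr_c[U (ρ ⊗ |T⟩_c⟨T|) U†] acts on density operators ρ on ℂ^d as $(ρ) = cos²λ · ρ + sin²λ · |T⟩⟨T| + i sin λ cos λ · (ρ|T⟩⟨T| − |T⟩⟨T|ρ). -/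
open Matrix Complex ComplexOrder NormedSpace Kronecker

/-- The swap operator on `ℂ^d ⊗ ℂ^d`: `S (i,j) (k,l) = δ_{i,l} δ_{j,k}`, i.e.
`S = ∑_{i,j} |i⟩⟨j| ⊗ |j⟩⟨i|`. -/
def swapOp (d : ℕ) : Matrix (Fin d × Fin d) (Fin d × Fin d) ℂ :=
  Matrix.of fun p q => if p.1 = q.2 ∧ p.2 = q.1 then 1 else 0

lemma swap_mul_apply {d : ℕ} (M : Matrix (Fin d × Fin d) (Fin d × Fin d) ℂ)
    (i j : Fin d) (q : Fin d × Fin d) :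
    (swapOp d * M) (i, j) q = M (j, i) q := by
  simp [swapOp, Matrix.mul_apply, Fintype.sum_prod_type, ite_and, Finset.sum_ite_eq,
    Finset.sum_ite_eq']

lemma mul_swap_apply {d : ℕ} (M : Matrix (Fin d × Fin d) (Fin d × Fin d) ℂ)
    (p : Fin d × Fin d) (k l : Fin d) :
    (M * swapOp d) p (k, l) = M p (l, k) := by
  simp [swapOp, Matrix.mul_apply, Fintype.sum_prod_type, ite_and, Finset.sum_ite_eq,
    Finset.sum_ite_eq']

lemma swap_mul_swap (d : ℕ) : swapOp d * swapOp d = 1 := by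
  ext ⟨i, j⟩ ⟨k, l⟩
  rw [swap_mul_apply]
  simp [swapOp, Matrix.one_apply, Prod.ext_iff, and_comm]

lemma swap_conjTranspose (d : ℕ) : (swapOp d)ᴴ = swapOp d := by
  ext ⟨i, j⟩ ⟨k, l⟩
  simp [swapOp, Matrix.conjTranspose_apply, and_comm]
  aesop

lemma ptrace_kron {d : ℕ} (A B : Matrix (Fin d) (Fin d) ℂ) :
    ptraceControl (A ⊗ₖ B) = B.trace • A := by
  ext i j
  simp [ptraceControl, Matrix.trace, Matrix.diag, Finset.mul_sum, mul_comm]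

lemma ptrace_kron_swap {d : ℕ} (A B : Matrix (Fin d) (Fin d) ℂ) :
    ptraceControl ((A ⊗ₖ B) * swapOp d) = A * B := by
  ext i j
  simp only [ptraceControl, Matrix.of_apply]
  simp_rw [mul_swap_apply]
  simp [Matrix.mul_apply]

lemma ptrace_swap_kron {d : ℕ} (A B : Matrix (Fin d) (Fin d) ℂ) :
    ptraceControl (swapOp d * (A ⊗ₖ B)) = B * A := by
  ext i j
  simp only [ptraceControl, Matrix.of_apply]
  simp_rw [swap_mul_apply]
  simp [Matrix.mul_apply, mul_comm]

lemma ptrace_swap_kron_swap {d : ℕ} (A B : Matrix (Fin d) (Fin d) ℂ) :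
    ptraceControl (swapOp d * (A ⊗ₖ B) * swapOp d) = A.trace • B := by
  ext i j
  simp only [ptraceControl, Matrix.of_apply]
  simp_rw [mul_swap_apply, swap_mul_apply]
  simp only [Matrix.kroneckerMap_apply, Matrix.smul_apply, Matrix.trace, Matrix.diag,
    smul_eq_mul, Finset.sum_mul]

lemma ptrace_add {d : ℕ} (A B : Matrix (Fin d × Fin d) (Fin d × Fin d) ℂ) :
    ptraceControl (A + B) = ptraceControl A + ptraceControl B := by
  ext i j; simp [ptraceControl, Finset.sum_add_distrib]

lemma ptrace_smul {d : ℕ} (c : ℂ) (A : Matrix (Fin d × Fin d) (Fin d × Fin d) ℂ) :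
    ptraceControl (c • A) = c • ptraceControl A := by
  ext i j; simp [ptraceControl, Finset.mul_sum]

/-- `exp(-iλS) = cos λ • 1 - (i sin λ) • S`. -/
lemma exp_neg_I_smul_swap (d : ℕ) (l : ℝ) :
    NormedSpace.exp ((-Complex.I * (l : ℂ)) • swapOp d) =
      ((Real.cos l : ℂ)) • (1 : Matrix (Fin d × Fin d) (Fin d × Fin d) ℂ) +
        (-Complex.I * (Real.sin l : ℂ)) • swapOp d := by
  rw [exp_eq_tsum (𝕂 := ℂ)]
  refine HasSum.tsum_eq ?_
  set c : ℂ := -Complex.I * (l : ℂ) with hc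
  have hc2 : c ^ 2 = -((l : ℂ) ^ 2) := by
    rw [hc, mul_pow, neg_pow, Complex.I_sq]; ring
  have hS2 : swapOp d ^ 2 = 1 := by rw [sq, swap_mul_swap]
  have heven : ∀ k : ℕ,
      ((((2 * k).factorial : ℂ))⁻¹ • (c • swapOp d) ^ (2 * k)) =
        ((-1 : ℂ) ^ k * (l : ℂ) ^ (2 * k) / (((2 * k).factorial : ℕ) : ℂ)) •
          (1 : Matrix (Fin d × Fin d) (Fin d × Fin d) ℂ) := by
    intro k
    rw [smul_pow, pow_mul, pow_mul, hS2, hc2, one_pow, smul_smul]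
    congr 1
    rw [neg_pow, ← pow_mul]
    ring
  have hodd : ∀ k : ℕ,
      ((((2 * k + 1).factorial : ℂ))⁻¹ • (c • swapOp d) ^ (2 * k + 1)) =
        (-Complex.I * ((-1 : ℂ) ^ k * (l : ℂ) ^ (2 * k + 1) / (((2 * k + 1).factorial : ℕ) : ℂ))) •
          swapOp d := by
    intro k
    rw [smul_pow, pow_succ, pow_succ, pow_mul, pow_mul, hS2, hc2, one_pow, one_mul, smul_smul]
    congr 1
    rw [neg_pow, ← pow_mul, hc]
    ring
  refine HasSum.even_add_odd ?_ ?_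
  · simp only [heven]
    have h1 := (Complex.hasSum_cos (l : ℂ)).smul_const
      (1 : Matrix (Fin d × Fin d) (Fin d × Fin d) ℂ)
    rwa [← Complex.ofReal_cos] at h1
  · simp only [hodd]
    have h1 := ((Complex.hasSum_sin (l : ℂ)).mul_left (-Complex.I)).smul_const (swapOp d)
    rwa [← Complex.ofReal_sin] at h1

/-- **Example 2 (weak-swap channel action).** For `U = exp(−iλS)` with `S` the swap operator,
and a controller initialised in the unit-vector target state `T`, the channel
`$(ρ) = Tr_c[U (ρ ⊗ |T⟩⟨T|) Uᴴ]` acts on density operators as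
`$(ρ) = cos²λ·ρ + sin²λ·|T⟩⟨T| + i sin λ cos λ·(ρ|T⟩⟨T| − |T⟩⟨T|ρ)`. -/
theorem weak_swap_channel_action {d : ℕ} (l : ℝ)
    (T : Fin d → ℂ) (hT : star T ⬝ᵥ T = 1)
    (ρ : Matrix (Fin d) (Fin d) ℂ) (hρ : ρ.PosSemidef) (hρtr : ρ.trace = 1) :
    ptraceControl (NormedSpace.exp ((-Complex.I * (l : ℂ)) • swapOp d) *
        (ρ ⊗ₖ vecMulVec T (star T)) *
        (NormedSpace.exp ((-Complex.I * (l : ℂ)) • swapOp d))ᴴ) =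
      ((Real.cos l ^ 2 : ℝ) : ℂ) • ρ + ((Real.sin l ^ 2 : ℝ) : ℂ) • vecMulVec T (star T) +
        (Complex.I * (Real.sin l : ℂ) * (Real.cos l : ℂ)) •
          (ρ * vecMulVec T (star T) - vecMulVec T (star T) * ρ) := by
  set P := vecMulVec T (star T) with hP
  have hU : NormedSpace.exp ((-Complex.I * (l : ℂ)) • swapOp d) =
      ((Real.cos l : ℂ)) • (1 : Matrix (Fin d × Fin d) (Fin d × Fin d) ℂ) +
        (-Complex.I * (Real.sin l : ℂ)) • swapOp d :=
    exp_neg_I_smul_swap d l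
  have hUH : (NormedSpace.exp ((-Complex.I * (l : ℂ)) • swapOp d))ᴴ =
      ((Real.cos l : ℂ)) • (1 : Matrix (Fin d × Fin d) (Fin d × Fin d) ℂ) +
        (Complex.I * (Real.sin l : ℂ)) • swapOp d := by
    rw [hU, conjTranspose_add, conjTranspose_smul, conjTranspose_smul,
      conjTranspose_one, swap_conjTranspose]
    congr 2
    · simp [Complex.ext_iff]
    · simp [Complex.ext_iff]
  have hPtr : P.trace = 1 := by
    rw [hP, Matrix.trace, ← hT]
    simp [Matrix.diag, vecMulVec_apply, dotProduct, mul_comm]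
  set M := ρ ⊗ₖ P with hM
  have expand : NormedSpace.exp ((-Complex.I * (l : ℂ)) • swapOp d) * M *
      (NormedSpace.exp ((-Complex.I * (l : ℂ)) • swapOp d))ᴴ =
      ((Real.cos l : ℂ) * (Real.cos l : ℂ)) • M +
        ((Real.cos l : ℂ) * (Complex.I * (Real.sin l : ℂ))) • (M * swapOp d) +
        ((-Complex.I * (Real.sin l : ℂ)) * (Real.cos l : ℂ)) • (swapOp d * M) +
        ((-Complex.I * (Real.sin l : ℂ)) * (Complex.I * (Real.sin l : ℂ))) •
          (swapOp d * M * swapOp d) := by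
    rw [hUH, hU]
    rw [add_mul, add_mul, mul_add, mul_add]
    simp only [smul_mul_assoc, mul_smul_comm, one_mul, mul_one, smul_smul, Matrix.mul_assoc]
    module
  rw [expand, ptrace_add, ptrace_add, ptrace_add, ptrace_smul, ptrace_smul, ptrace_smul,
    ptrace_smul, hM, ptrace_kron, ptrace_kron_swap, ptrace_swap_kron, ptrace_swap_kron_swap,
    hPtr, hρtr, one_smul, one_smul]
  have hab : (Real.cos l : ℂ) * (Real.cos l : ℂ) = ((Real.cos l ^ 2 : ℝ) : ℂ) := by
    rw [Complex.ofReal_pow]; ring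
  have h2 : (Real.cos l : ℂ) * (Complex.I * (Real.sin l : ℂ)) =
      Complex.I * (Real.sin l : ℂ) * (Real.cos l : ℂ) := by ring
  have h3 : (-Complex.I * (Real.sin l : ℂ)) * (Real.cos l : ℂ) =
      -(Complex.I * (Real.sin l : ℂ) * (Real.cos l : ℂ)) := by ring
  have h4 : (-Complex.I * (Real.sin l : ℂ)) * (Complex.I * (Real.sin l : ℂ)) =
      ((Real.sin l ^ 2 : ℝ) : ℂ) := by
    rw [Complex.ofReal_pow]
    linear_combination (-(Real.sin l : ℂ) ^ 2) * Complex.I_sq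
  rw [hab, h2, h3, h4, smul_sub]
  module
end

section
/- Let |T⟩ = |0⟩ ∈ ℂ^d and λ ∈ ℝ with sin λ ≠ 0 and cos λ ≠ 0. Define M_0 = e^{−iλ|T⟩⟨T|}(cos λ · I + (1 − cos λ)|T⟩⟨T|) and, for i = 1, …, d−1, M_i = e^{−iπ(|T⟩⟨i| + |i⟩⟨T|)/2} sin λ |i⟩⟨i|. Then ∑_{i=0}^{d-1} M_i† M_i = I, each M_i satisfies M_i|T⟩ = z_i|T⟩ for some z_i ∈ ℂ, and the vectors M_0†|T⟩, …, M_{d-1}†|T⟩ span ℂ^d; consequently (by Theorem 1) every density operator on ℂ^d converges to |T⟩⟨T| under iteration of the channel $(ρ) = ∑_i M_i ρ M_i†. -/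
open Matrix Complex ComplexOrder NormedSpace Filter

set_option maxHeartbeats 1000000 in
lemma exp_smul_idem {n : Type*} [Fintype n] [DecidableEq n] (c : ℂ)
    (P : Matrix n n ℂ) (hP : P * P = P) :
    NormedSpace.exp (c • P) = 1 + (Complex.exp c - 1) • P := by
  letI : SeminormedRing (Matrix n n ℂ) := Matrix.linftyOpSemiNormedRing
  letI : NormedRing (Matrix n n ℂ) := Matrix.linftyOpNormedRing
  letI : NormedAlgebra ℂ (Matrix n n ℂ) := Matrix.linftyOpNormedAlgebra
  have hpow : ∀ k : ℕ, P ^ (k + 1) = P := by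
    intro k
    induction k with
    | zero => simp
    | succ k ih => rw [pow_succ, ih, hP]
  have hsum : Summable (fun k : ℕ => ((Nat.factorial k : ℂ))⁻¹ • (c • P) ^ k) :=
    expSeries_summable' (𝕂 := ℂ) (c • P)
  have hc : Summable (fun k : ℕ => ((Nat.factorial k : ℂ))⁻¹ * c ^ k) := by
    simpa [smul_eq_mul] using expSeries_summable' (𝕂 := ℂ) c
  have hc1 : Summable (fun k : ℕ => ((Nat.factorial (k+1) : ℂ))⁻¹ * c ^ (k + 1)) :=
    (summable_nat_add_iff 1).2 hc
  have hexpc : Complex.exp c = 1 + ∑' k : ℕ, ((Nat.factorial (k+1) : ℂ))⁻¹ * c ^ (k + 1) := by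
    simp only [Complex.exp_eq_exp_ℂ, exp_eq_tsum (𝕂 := ℂ), smul_eq_mul]
    rw [hc.tsum_eq_zero_add]
    simp [smul_eq_mul]
  simp only [exp_eq_tsum (𝕂 := ℂ)]
  rw [hsum.tsum_eq_zero_add]
  have h1 : ∀ k : ℕ, ((Nat.factorial (k+1) : ℂ))⁻¹ • (c • P) ^ (k + 1)
      = (((Nat.factorial (k+1) : ℂ))⁻¹ * c ^ (k + 1)) • P := by
    intro k
    rw [smul_pow, hpow, smul_smul]
  simp only [h1]
  rw [hc1.tsum_smul_const, hexpc]
  simp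

set_option maxHeartbeats 1000000 in
lemma exp_offdiag {d : ℕ} [NeZero d] {i : Fin d} (hi : i ≠ 0) (c : ℂ) :
    NormedSpace.exp (c • (Matrix.single (0 : Fin d) i (1 : ℂ) + Matrix.single i (0 : Fin d) (1 : ℂ)))
      = 1 + ((Complex.exp c + Complex.exp (-c)) / 2 - 1) •
          (Matrix.single (0 : Fin d) (0 : Fin d) (1 : ℂ) + Matrix.single i i (1 : ℂ))
        + ((Complex.exp c - Complex.exp (-c)) / 2) •
          (Matrix.single (0 : Fin d) i (1 : ℂ) + Matrix.single i (0 : Fin d) (1 : ℂ)) := by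
  set E00 := Matrix.single (0 : Fin d) (0 : Fin d) (1 : ℂ)
  set Eii := Matrix.single i i (1 : ℂ)
  set E0i := Matrix.single (0 : Fin d) i (1 : ℂ)
  set Ei0 := Matrix.single i (0 : Fin d) (1 : ℂ)
  have h00 : E00 * E00 = E00 := by simp [E00, single_mul_single_same]
  have h0i : E00 * E0i = E0i := by simp [E00, E0i, single_mul_single_same]
  have h0i' : E00 * Ei0 = 0 := by simp [E00, Ei0, single_mul_single_of_ne, hi, hi.symm]
  have h0ii : E00 * Eii = 0 := by simp [E00, Eii, single_mul_single_of_ne, hi, hi.symm]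
  have hii : Eii * Eii = Eii := by simp [Eii, single_mul_single_same]
  have hii0 : Eii * Ei0 = Ei0 := by simp [Eii, Ei0, single_mul_single_same]
  have hii1 : Eii * E0i = 0 := by simp [Eii, E0i, single_mul_single_of_ne, hi, hi.symm]
  have hii2 : Eii * E00 = 0 := by simp [Eii, E00, single_mul_single_of_ne, hi, hi.symm]
  have ha1 : E0i * Ei0 = E00 := by simp [E0i, Ei0, E00, single_mul_single_same]
  have ha2 : Ei0 * E0i = Eii := by simp [Ei0, E0i, Eii, single_mul_single_same]
  have ha3 : E0i * E0i = 0 := by simp [E0i, single_mul_single_of_ne, hi, hi.symm]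
  have ha4 : Ei0 * Ei0 = 0 := by simp [Ei0, single_mul_single_of_ne, hi, hi.symm]
  have ha5 : E0i * Eii = E0i := by simp [E0i, Eii, single_mul_single_same]
  have ha6 : E0i * E00 = 0 := by simp [E0i, E00, single_mul_single_of_ne, hi, hi.symm]
  have ha7 : Ei0 * E00 = Ei0 := by simp [Ei0, E00, single_mul_single_same]
  have ha8 : Ei0 * Eii = 0 := by simp [Ei0, Eii, single_mul_single_of_ne, hi, hi.symm]
  set R : Matrix (Fin d) (Fin d) ℂ := (2⁻¹ : ℂ) • (E00 + Eii + E0i + Ei0) with hR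
  set S : Matrix (Fin d) (Fin d) ℂ := (2⁻¹ : ℂ) • (E00 + Eii - E0i - Ei0) with hS
  have hRR : R * R = R := by
    rw [hR]
    rw [smul_mul_smul_comm]
    simp only [mul_add, add_mul, sub_mul, mul_sub, h00, h0i, h0i', h0ii, hii, hii0, hii1, hii2,
      ha1, ha2, ha3, ha4, ha5, ha6, ha7, ha8]
    module
  have hSS : S * S = S := by
    rw [hS, smul_mul_smul_comm]
    simp only [mul_add, add_mul, sub_mul, mul_sub, h00, h0i, h0i', h0ii, hii, hii0, hii1, hii2,
      ha1, ha2, ha3, ha4, ha5, ha6, ha7, ha8]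
    module
  have hRS : R * S = 0 := by
    rw [hR, hS, smul_mul_smul_comm]
    simp only [mul_add, add_mul, sub_mul, mul_sub, h00, h0i, h0i', h0ii, hii, hii0, hii1, hii2,
      ha1, ha2, ha3, ha4, ha5, ha6, ha7, ha8]
    module
  have hSR : S * R = 0 := by
    rw [hR, hS, smul_mul_smul_comm]
    simp only [mul_add, add_mul, sub_mul, mul_sub, h00, h0i, h0i', h0ii, hii, hii0, hii1, hii2,
      ha1, ha2, ha3, ha4, ha5, ha6, ha7, ha8]
    module
  have hdecomp : c • (E0i + Ei0) = c • R + (-c) • S := by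
    rw [hR, hS]; module
  have hcomm : Commute (c • R) ((-c) • S) := by
    have h1 : (c • R) * ((-c) • S) = 0 := by rw [smul_mul_smul_comm, hRS, smul_zero]
    have h2 : ((-c) • S) * (c • R) = 0 := by rw [smul_mul_smul_comm, hSR, smul_zero]
    rw [Commute, SemiconjBy, h1, h2]
  rw [hdecomp]
  have hexp := Matrix.exp_add_of_commute (c • R) ((-c) • S) hcomm
  rw [hexp, exp_smul_idem c R hRR, exp_smul_idem (-c) S hSS]
  rw [mul_add, add_mul, add_mul, smul_mul_smul_comm, hRS]
  simp only [one_mul, mul_one, smul_zero]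
  rw [hR, hS]
  module

set_option maxHeartbeats 1000000 in
set_option synthInstance.maxHeartbeats 400000 in
/-- **Example 2 (Kraus operators of the weak swap).** For the target `|T⟩ = |0⟩ ∈ ℂ^d` and
`λ ∈ ℝ` with `sin λ ≠ 0` and `cos λ ≠ 0`, the operators
`M₀ = e^{−iλ|T⟩⟨T|}(cos λ·I + (1 − cos λ)|T⟩⟨T|)` and
`Mᵢ = e^{−iπ(|T⟩⟨i| + |i⟩⟨T|)/2} sin λ |i⟩⟨i|` (for `i ≠ 0`) satisfy the completeness relation
and the fixed-point condition with respect to `T`, the vectors `Mᵢᴴ|T⟩` span `ℂ^d`, and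
consequently every density operator converges to `|T⟩⟨T|` under iteration of the channel
`ρ ↦ ∑ i, Mᵢ ρ Mᵢᴴ`. -/
theorem weak_swap_kraus_control {d : ℕ} [NeZero d] (l : ℝ)
    (hsin : Real.sin l ≠ 0) (hcos : Real.cos l ≠ 0) :
    let T : Fin d → ℂ := Pi.single (0 : Fin d) 1
    let M : Fin d → Matrix (Fin d) (Fin d) ℂ := fun i =>
      if i = 0 then
        NormedSpace.exp ((-Complex.I * (l : ℂ)) • vecMulVec T (star T)) *
          ((Real.cos l : ℂ) • (1 : Matrix (Fin d) (Fin d) ℂ) +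
            ((1 - Real.cos l : ℝ) : ℂ) • vecMulVec T (star T))
      else
        NormedSpace.exp ((-Complex.I * ((Real.pi : ℂ) / 2)) •
            (Matrix.single (0 : Fin d) i (1 : ℂ) +
              Matrix.single i (0 : Fin d) (1 : ℂ))) *
          ((Real.sin l : ℂ) • Matrix.single i i (1 : ℂ))
    (∑ i, (M i)ᴴ * M i = 1) ∧
    (∀ i, ∃ z : ℂ, M i *ᵥ T = z • T) ∧
    Submodule.span ℂ (Set.range fun i => (M i)ᴴ *ᵥ T) = ⊤ ∧
    (∀ ρ : Matrix (Fin d) (Fin d) ℂ, ρ.PosSemidef → ρ.trace = 1 →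
      Tendsto (fun k => (fun σ => ∑ i, M i * σ * (M i)ᴴ)^[k] ρ) atTop
        (nhds (vecMulVec T (star T)))) := by
  intro T M
  set m : Fin d → ℂ := fun j => if j = 0 then Complex.exp (-Complex.I * l) else (Real.cos l : ℂ) with hm
  have hT : vecMulVec T (star T) = Matrix.single (0 : Fin d) (0 : Fin d) (1 : ℂ) := by
    ext j k
    by_cases hj : j = 0 <;> by_cases hk : k = 0 <;>
      simp [vecMulVec_apply, T, Pi.single_apply, Matrix.single, hj, hk, eq_comm]
  have hM0 : M 0 = diagonal m := by
    have hP : Matrix.single (0 : Fin d) (0 : Fin d) (1 : ℂ) * Matrix.single (0 : Fin d) (0 : Fin d) (1 : ℂ)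
        = Matrix.single (0 : Fin d) (0 : Fin d) (1 : ℂ) := by simp
    have : M 0 = (1 + (Complex.exp (-Complex.I * l) - 1) • Matrix.single (0 : Fin d) (0 : Fin d) (1 : ℂ)) *
        ((Real.cos l : ℂ) • (1 : Matrix (Fin d) (Fin d) ℂ) +
          ((1 - Real.cos l : ℝ) : ℂ) • Matrix.single (0 : Fin d) (0 : Fin d) (1 : ℂ)) := by
      simp only [M, if_pos rfl, hT]
      rw [exp_smul_idem _ _ hP]
    rw [this]
    have hmul : (1 + (Complex.exp (-Complex.I * l) - 1) • Matrix.single (0 : Fin d) (0 : Fin d) (1 : ℂ)) *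
        ((Real.cos l : ℂ) • (1 : Matrix (Fin d) (Fin d) ℂ) +
          ((1 - Real.cos l : ℝ) : ℂ) • Matrix.single (0 : Fin d) (0 : Fin d) (1 : ℂ))
        = (Real.cos l : ℂ) • (1 : Matrix (Fin d) (Fin d) ℂ) +
          (Complex.exp (-Complex.I * l) - (Real.cos l : ℂ)) • Matrix.single (0 : Fin d) (0 : Fin d) (1 : ℂ) := by
      simp only [mul_add, add_mul, smul_mul_smul_comm, hP, one_mul, mul_one, smul_mul_assoc,
        mul_smul_comm, Complex.ofReal_sub, Complex.ofReal_one]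
      module
    rw [hmul]
    ext j k
    by_cases hj : j = 0 <;> by_cases hk : k = 0 <;>
      simp [diagonal_apply, hm, Matrix.single, hj, hk, eq_comm, Matrix.one_apply]
  have hMi : ∀ i : Fin d, i ≠ 0 → M i = (-Complex.I * (Real.sin l : ℂ)) • Matrix.single (0 : Fin d) i (1 : ℂ) := by
    intro i hi
    have hexpI : Complex.exp (-Complex.I * ((Real.pi : ℂ) / 2)) = -Complex.I := by
      have h : -Complex.I * ((Real.pi : ℂ) / 2) = ((-(Real.pi / 2) : ℝ) : ℂ) * Complex.I := by
        push_cast; ring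
      rw [h, Complex.exp_mul_I, ← Complex.ofReal_cos, ← Complex.ofReal_sin]
      simp [Real.cos_pi_div_two, Real.sin_pi_div_two]
    have hexpI' : Complex.exp (-(-Complex.I * ((Real.pi : ℂ) / 2))) = Complex.I := by
      have h : -(-Complex.I * ((Real.pi : ℂ) / 2)) = (((Real.pi / 2) : ℝ) : ℂ) * Complex.I := by
        push_cast; ring
      rw [h, Complex.exp_mul_I, ← Complex.ofReal_cos, ← Complex.ofReal_sin]
      simp [Real.cos_pi_div_two, Real.sin_pi_div_two]
    have h1 : M i = (1 + ((-Complex.I + Complex.I) / 2 - 1) •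
          (Matrix.single (0 : Fin d) (0 : Fin d) (1 : ℂ) + Matrix.single i i (1 : ℂ))
        + ((-Complex.I - Complex.I) / 2) •
          (Matrix.single (0 : Fin d) i (1 : ℂ) + Matrix.single i (0 : Fin d) (1 : ℂ))) *
        ((Real.sin l : ℂ) • Matrix.single i i (1 : ℂ)) := by
      simp only [M, if_neg hi]
      rw [exp_offdiag hi, hexpI, hexpI']
    rw [h1]
    have e1 : Matrix.single (0 : Fin d) (0 : Fin d) (1 : ℂ) * Matrix.single i i (1:ℂ) = 0 := by
      simp [single_mul_single_of_ne, hi, hi.symm]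
    have e2 : Matrix.single i i (1:ℂ) * Matrix.single i i (1:ℂ) = Matrix.single i i (1:ℂ) := by
      simp
    have e3 : Matrix.single (0 : Fin d) i (1:ℂ) * Matrix.single i i (1:ℂ)
        = Matrix.single (0 : Fin d) i (1:ℂ) := by simp
    have e4 : Matrix.single i (0 : Fin d) (1:ℂ) * Matrix.single i i (1:ℂ) = 0 := by
      simp [single_mul_single_of_ne, hi, hi.symm]
    simp only [add_mul, one_mul, smul_mul_assoc, mul_smul_comm, mul_add, e1, e2, e3, e4]
    module
  have hE : ∀ i : Fin d, (Matrix.single (0 : Fin d) i (1 : ℂ))ᴴ = Matrix.single i (0 : Fin d) (1 : ℂ) := by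
    intro i
    ext a b
    simp [conjTranspose_apply, Matrix.single, apply_ite (star : ℂ → ℂ), and_comm]
  have hz1 : star (Complex.exp (-Complex.I * (l : ℂ))) * Complex.exp (-Complex.I * (l : ℂ)) = 1 := by
    rw [Complex.star_def, ← Complex.exp_conj, ← Complex.exp_add]
    rw [show (starRingEnd ℂ) (-Complex.I * (l : ℂ)) + -Complex.I * (l : ℂ) = 0 by
      simp only [_root_.map_mul, map_neg, Complex.conj_I, Complex.conj_ofReal]
      ring]
    exact Complex.exp_zero
  have hz1n : (starRingEnd ℂ) (Complex.exp (-(Complex.I * (l : ℂ)))) *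
      Complex.exp (-(Complex.I * (l : ℂ))) = 1 := by
    simpa [neg_mul, Complex.star_def] using hz1
  have hstar_s : star (-Complex.I * (Real.sin l : ℂ)) = Complex.I * (Real.sin l : ℂ) := by
    simp only [star_mul', star_neg, Complex.star_def, Complex.conj_I, Complex.conj_ofReal]
    ring
  have hss : star (-Complex.I * (Real.sin l : ℂ)) * (-Complex.I * (Real.sin l : ℂ))
      = (Real.sin l : ℂ) ^ 2 := by
    rw [hstar_s]
    linear_combination (-(Real.sin l : ℂ) ^ 2) * Complex.I_mul_I
  have hstarm : ∀ j : Fin d, j ≠ 0 → star (m j) = (Real.cos l : ℂ) := by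
    intro j hj
    simp only [hm, if_neg hj]
    rw [Complex.star_def, Complex.conj_ofReal]
  have hsc : (Real.sin l : ℂ) ^ 2 = 1 - (Real.cos l : ℂ) ^ 2 := by
    have h := Real.sin_sq_add_cos_sq l
    have : (Real.sin l : ℝ) ^ 2 = 1 - Real.cos l ^ 2 := by linarith
    exact_mod_cast congrArg (Complex.ofReal) this
  refine ⟨?_, ?_, ?_, ?_⟩
  · -- completeness
    rw [← Finset.add_sum_erase _ _ (Finset.mem_univ (0 : Fin d))]
    have h0 : (M 0)ᴴ * M 0 = diagonal (fun j => star (m j) * m j) := by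
      rw [hM0, diagonal_conjTranspose, diagonal_mul_diagonal]
      rfl
    have hterm : ∀ i ∈ Finset.univ.erase (0 : Fin d),
        (M i)ᴴ * M i = ((Real.sin l : ℂ) ^ 2) • Matrix.single i i (1 : ℂ) := by
      intro i hi
      have hi0 : i ≠ 0 := Finset.ne_of_mem_erase hi
      rw [hMi i hi0, conjTranspose_smul, hE i, smul_mul_smul_comm,
        single_mul_single_same, one_mul, hss]
    rw [h0, Finset.sum_congr rfl hterm]
    ext j k
    rw [Matrix.add_apply, Matrix.sum_apply]
    by_cases hjk : j = k
    · subst hjk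
      by_cases hj : j = 0
      · subst hj
        have hsum0 : ∑ i ∈ Finset.univ.erase (0 : Fin d),
            (((Real.sin l : ℂ) ^ 2) • Matrix.single i i (1 : ℂ)) 0 0 = 0 := by
          refine Finset.sum_eq_zero fun i hi => ?_
          have hi0 : i ≠ 0 := Finset.ne_of_mem_erase hi
          simp [Matrix.single, hi0]
        rw [hsum0]
        simp [hm, hz1n]
      · have hsum1 : ∑ i ∈ Finset.univ.erase (0 : Fin d),
            (((Real.sin l : ℂ) ^ 2) • Matrix.single i i (1 : ℂ)) j j
            = (Real.sin l : ℂ) ^ 2 := by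
          rw [Finset.sum_eq_single_of_mem j (Finset.mem_erase.2 ⟨hj, Finset.mem_univ j⟩)]
          · simp [Matrix.single]
          · intro i _ hij
            simp [Matrix.single, hij]
        rw [hsum1]
        rw [diagonal_apply_eq, Matrix.one_apply_eq, hstarm j hj]
        simp only [hm]
        rw [if_neg hj]
        rw [show (Real.cos l : ℂ) * (Real.cos l : ℂ) + (Real.sin l : ℂ) ^ 2
          = (Real.sin l : ℂ) ^ 2 + (Real.cos l : ℂ) ^ 2 by ring, hsc]
        ring
    · have hsum2 : ∑ i ∈ Finset.univ.erase (0 : Fin d),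
          (((Real.sin l : ℂ) ^ 2) • Matrix.single i i (1 : ℂ)) j k = 0 := by
        refine Finset.sum_eq_zero fun i _ => ?_
        have : ¬ (i = j ∧ i = k) := by
          rintro ⟨rfl, rfl⟩; exact hjk rfl
        simp [Matrix.single]
        intro h1 h2
        exact absurd (h1.symm.trans h2) hjk
      rw [hsum2, diagonal_apply_ne _ hjk, Matrix.one_apply_ne hjk]
      simp
  · -- fixed point
    intro i
    by_cases hi : i = 0
    · subst hi
      refine ⟨Complex.exp (-Complex.I * l), ?_⟩
      rw [hM0]
      ext j
      by_cases hj : j = 0 <;>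
        simp [mulVec_diagonal, T, Pi.single_apply, hm, hj]
    · refine ⟨0, ?_⟩
      have hTi : T i = 0 := by simp [T, Pi.single_apply, hi]
      rw [hMi i hi, Matrix.smul_mulVec, single_mulVec]
      ext j
      simp [Function.update_apply, hTi]
  · -- span
    have hmem : ∀ j : Fin d, Pi.single j (1 : ℂ) ∈
        Submodule.span ℂ (Set.range fun i => (M i)ᴴ *ᵥ T) := by
      intro j
      by_cases hj : j = 0
      · subst hj
        have hv : (M 0)ᴴ *ᵥ T = star (Complex.exp (-Complex.I * (l : ℂ))) • T := by
          rw [hM0, diagonal_conjTranspose]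
          ext a
          by_cases ha : a = 0 <;>
            simp [mulVec_diagonal, T, Pi.single_apply, hm, ha]
        have hz : star (Complex.exp (-Complex.I * (l : ℂ))) ≠ 0 := by
          simp [Complex.exp_ne_zero]
        have hmem0 : star (Complex.exp (-Complex.I * (l : ℂ))) • T ∈
            Submodule.span ℂ (Set.range fun i => (M i)ᴴ *ᵥ T) := by
          rw [← hv]
          exact Submodule.subset_span ⟨0, rfl⟩
        have h5 := Submodule.smul_mem
          (Submodule.span ℂ (Set.range fun i => (M i)ᴴ *ᵥ T))
          (star (Complex.exp (-Complex.I * (l : ℂ))))⁻¹ hmem0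
        rwa [smul_smul, inv_mul_cancel₀ hz, one_smul] at h5
      · have hv : (M j)ᴴ *ᵥ T = (Complex.I * (Real.sin l : ℂ)) • (Pi.single j 1 : Fin d → ℂ) := by
          rw [hMi j hj, conjTranspose_smul, hE j, Matrix.smul_mulVec,
            single_mulVec, hstar_s]
          ext a
          simp [T, Pi.single_apply, Function.update_apply]
        have hz : Complex.I * (Real.sin l : ℂ) ≠ 0 :=
          mul_ne_zero Complex.I_ne_zero (Complex.ofReal_ne_zero.2 hsin)
        have hmemj : (Complex.I * (Real.sin l : ℂ)) • (Pi.single j 1 : Fin d → ℂ) ∈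
            Submodule.span ℂ (Set.range fun i => (M i)ᴴ *ᵥ T) := by
          rw [← hv]
          exact Submodule.subset_span ⟨j, rfl⟩
        have h5 := Submodule.smul_mem
          (Submodule.span ℂ (Set.range fun i => (M i)ᴴ *ᵥ T))
          (Complex.I * (Real.sin l : ℂ))⁻¹ hmemj
        rwa [smul_smul, inv_mul_cancel₀ hz, one_smul] at h5
    rw [eq_top_iff, ← (Pi.basisFun ℂ (Fin d)).span_eq, Submodule.span_le]
    rintro _ ⟨j, rfl⟩
    simpa [Pi.basisFun_apply] using hmem j
  · -- convergence
    intro ρ _ htr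
    have htr' : ∑ i, ρ i i = 1 := by
      simpa [Matrix.trace, Matrix.diag] using htr
    have hsum_diag : ∑ i ∈ Finset.univ.erase (0 : Fin d), ρ i i = 1 - ρ 0 0 := by
      rw [← Finset.add_sum_erase _ _ (Finset.mem_univ (0 : Fin d))] at htr'
      linear_combination htr'
    have hmid : ∀ (σ : Matrix (Fin d) (Fin d) ℂ) (i : Fin d),
        Matrix.single (0 : Fin d) i (1 : ℂ) * σ * Matrix.single i (0 : Fin d) (1 : ℂ)
          = σ i i • Matrix.single (0 : Fin d) (0 : Fin d) (1 : ℂ) := by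
      intro σ i
      ext a b
      by_cases ha : a = 0 <;> by_cases hb : b = 0 <;>
        simp [Matrix.mul_apply, Matrix.single, ite_and, ha, hb, eq_comm,
          Finset.sum_ite_eq, Finset.sum_ite_eq', mul_ite, ite_mul]
    have hPhi : ∀ σ : Matrix (Fin d) (Fin d) ℂ, (∑ i, M i * σ * (M i)ᴴ) =
        Matrix.of (fun j k => m j * σ j k * star (m k) +
          (if j = 0 ∧ k = 0 then
            (Real.sin l : ℂ) ^ 2 * (∑ i ∈ Finset.univ.erase (0 : Fin d), σ i i) else 0)) := by
      intro σ
      rw [← Finset.add_sum_erase _ _ (Finset.mem_univ (0 : Fin d))]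
      have h0 : M 0 * σ * (M 0)ᴴ = Matrix.of fun j k => m j * σ j k * star (m k) := by
        rw [hM0, diagonal_conjTranspose]
        ext j k
        rw [Matrix.mul_diagonal, Matrix.diagonal_mul]
        rfl
      have hterm : ∀ i ∈ Finset.univ.erase (0 : Fin d), M i * σ * (M i)ᴴ
          = ((Real.sin l : ℂ) ^ 2 * σ i i) • Matrix.single (0 : Fin d) (0 : Fin d) (1 : ℂ) := by
        intro i hi
        have hi0 : i ≠ 0 := Finset.ne_of_mem_erase hi
        rw [hMi i hi0, conjTranspose_smul, hE i]
        rw [smul_mul_assoc, smul_mul_assoc, mul_smul_comm, smul_smul, hmid σ i, smul_smul]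
        congr 1
        rw [mul_comm (-Complex.I * (Real.sin l : ℂ)) (star (-Complex.I * (Real.sin l : ℂ))), hss]
      rw [h0, Finset.sum_congr rfl hterm, ← Finset.sum_smul, ← Finset.mul_sum]
      ext j k
      rw [Matrix.add_apply]
      simp only [Matrix.of_apply, Matrix.smul_apply, smul_eq_mul]
      by_cases hj : j = 0 <;> by_cases hk : k = 0 <;>
        simp [Matrix.single, hj, hk, eq_comm]
    set F : ℕ → Matrix (Fin d) (Fin d) ℂ := fun n => Matrix.of fun j k =>
      if j = 0 ∧ k = 0 then 1 - ((Real.cos l : ℂ) ^ 2) ^ n * (1 - ρ 0 0)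
      else (m j * star (m k)) ^ n * ρ j k with hF
    have key : ∀ n : ℕ, (fun σ => ∑ i, M i * σ * (M i)ᴴ)^[n] ρ = F n := by
      intro n
      induction n with
      | zero =>
        ext j k
        by_cases hj : j = 0 <;> by_cases hk : k = 0 <;>
          simp [hF, hj, hk] <;> ring
      | succ n ih =>
        rw [Function.iterate_succ_apply', ih, hPhi]
        ext j k
        simp only [hF, Matrix.of_apply]
        by_cases hj : j = 0 <;> by_cases hk : k = 0
        · subst hj; subst hk
          simp only [if_pos (And.intro rfl rfl), and_self, if_true]
          have hdiag : ∀ i ∈ Finset.univ.erase (0 : Fin d),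
              (if i = 0 then (1 : ℂ) - ((Real.cos l : ℂ) ^ 2) ^ n * (1 - ρ 0 0)
                else (m i * star (m i)) ^ n * ρ i i)
              = ((Real.cos l : ℂ) ^ 2) ^ n * ρ i i := by
            intro i hi
            have hi0 : i ≠ 0 := Finset.ne_of_mem_erase hi
            rw [if_neg hi0]
            congr 2
            simp only [hm, if_neg hi0]
            rw [Complex.star_def, Complex.conj_ofReal]
            ring
          rw [Finset.sum_congr rfl hdiag, ← Finset.mul_sum, hsum_diag]
          have hm0 : m 0 = Complex.exp (-Complex.I * (l : ℂ)) := by simp [hm]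
          have hz1' : m 0 * star (m 0) = 1 := by rw [hm0]; rw [mul_comm]; exact hz1
          rw [pow_succ]
          linear_combination (1 - ((Real.cos l : ℂ) ^ 2) ^ n * (1 - ρ 0 0)) * hz1'
            + (((Real.cos l : ℂ) ^ 2) ^ n * (1 - ρ 0 0)) * hsc
        · have hcond : ¬ (j = 0 ∧ k = 0) := by tauto
          simp only [if_neg hcond]
          ring
        · have hcond : ¬ (j = 0 ∧ k = 0) := by tauto
          simp only [if_neg hcond]
          ring
        · have hcond : ¬ (j = 0 ∧ k = 0) := by tauto
          simp only [if_neg hcond]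
          ring
    have hfun : (fun k => (fun σ => ∑ i, M i * σ * (M i)ᴴ)^[k] ρ) = F := funext key
    rw [hfun, hT]
    have hnc : ‖(Real.cos l : ℂ)‖ < 1 := by
      have h1 : Real.cos l ^ 2 < 1 := by
        have h2 : 0 < Real.sin l ^ 2 := by positivity
        nlinarith [Real.sin_sq_add_cos_sq l]
      have h3 : |Real.cos l| < 1 := by
        nlinarith [_root_.sq_abs (Real.cos l), abs_nonneg (Real.cos l)]
      rw [Complex.norm_real, Real.norm_eq_abs]
      exact h3
    have hnm : ∀ j : Fin d, ‖m j‖ ≤ 1 := by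
      intro j
      simp only [hm]
      by_cases hj : j = 0
      · rw [if_pos hj]
        rw [Complex.norm_exp]
        simp
      · rw [if_neg hj]
        exact le_of_lt hnc
    have hnm0 : ‖m 0‖ = 1 := by
      simp only [hm, if_pos rfl]
      rw [Complex.norm_exp]
      simp
    refine tendsto_pi_nhds.2 ?_
    intro j
    rw [tendsto_pi_nhds]
    intro k
    by_cases hj : j = 0 <;> by_cases hk : k = 0
    · subst hj; subst hk
      have h1 : Tendsto (fun n : ℕ => (((Real.cos l : ℂ) ^ 2) ^ n * (1 - ρ 0 0))) atTop (nhds 0) := by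
        have h2 : ‖(Real.cos l : ℂ) ^ 2‖ < 1 := by
          rw [norm_pow]
          calc ‖(Real.cos l : ℂ)‖ ^ 2 ≤ ‖(Real.cos l : ℂ)‖ * 1 := by
                rw [pow_two]; exact mul_le_mul_of_nonneg_left hnc.le (norm_nonneg _)
          _ < 1 := by simpa using hnc
        simpa using (tendsto_pow_atTop_nhds_zero_of_norm_lt_one h2).mul_const (1 - ρ 0 0)
      have h3 : Tendsto (fun n : ℕ => 1 - ((Real.cos l : ℂ) ^ 2) ^ n * (1 - ρ 0 0))
          atTop (nhds 1) := by
        simpa using (tendsto_const_nhds (x := (1:ℂ)) (f := (atTop : Filter ℕ))).sub h1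
      have hfn : (fun n : ℕ => F n 0 0)
          = fun n : ℕ => 1 - ((Real.cos l : ℂ) ^ 2) ^ n * (1 - ρ 0 0) := by
        funext n; simp [hF]
      rw [hfn, show (Matrix.single (0 : Fin d) (0 : Fin d) (1 : ℂ)) 0 0 = 1 by
        simp [Matrix.single]]
      exact h3
    all_goals {
      have hcond : ¬ (j = 0 ∧ k = 0) := by tauto
      have hlt : ‖m j * star (m k)‖ < 1 := by
        rw [norm_mul, norm_star]
        rcases (not_and_or.1 hcond) with h | h
        · have : ‖m j‖ = ‖(Real.cos l : ℂ)‖ := by simp only [hm, if_neg h]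
          calc ‖m j‖ * ‖m k‖ ≤ ‖m j‖ * 1 :=
                mul_le_mul_of_nonneg_left (hnm k) (norm_nonneg _)
            _ = ‖m j‖ := mul_one _
            _ < 1 := by rw [this]; exact hnc
        · have : ‖m k‖ = ‖(Real.cos l : ℂ)‖ := by simp only [hm, if_neg h]
          calc ‖m j‖ * ‖m k‖ ≤ 1 * ‖m k‖ :=
                mul_le_mul_of_nonneg_right (hnm j) (norm_nonneg _)
            _ = ‖m k‖ := one_mul _
            _ < 1 := by rw [this]; exact hnc
      have h1 := (tendsto_pow_atTop_nhds_zero_of_norm_lt_one hlt).mul_const (ρ j k)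
      rw [zero_mul] at h1
      have hfn : (fun n : ℕ => F n j k) = fun n : ℕ => (m j * star (m k)) ^ n * ρ j k := by
        funext n; simp [hF, hcond]
      have hE00 : (Matrix.single (0 : Fin d) (0 : Fin d) (1 : ℂ)) j k = 0 := by
        have : ¬ ((0 : Fin d) = j ∧ (0 : Fin d) = k) := by
          rcases not_and_or.1 hcond with h | h
          · exact fun hc => h hc.1.symm
          · exact fun hc => h hc.2.symm
        simp [Matrix.single, this]
      rw [hfn, hE00]
      exact h1
    }
end
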